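/- arXiv:2603.12065 — 3 statements merged into one kernel-verified Lean document; each statement's English description precedes it below -/
import Mathlib

section
/- Let Ω ⊂ ℝ^d be a bounded smooth domain, s ∈ (0,1), p ≥ 2. Let u be a viscosity subsolution (respectively, supersolution) of ∂_t u + (−Δ_p)^s u = 0 in Ω×(t₁,t₂]. Assume φ ∈ C²(Q_r(x₀,t₀)) (C² in space, C¹ in time), where Q_r(x₀,t₀) ⊂ Ω×(t₁,t₂], and that φ touches u from above (respectively, below) at (x₀,t₀) in Q_r(x₀,t₀). Then the principal value defining (−Δ_p)^s u(x₀,t₀) exists and ∂_t φ(x₀,t₀) + (−Δ_p)^s u(x₀,t₀) ≤ 0 (respectively, ≥ 0). -/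
open MeasureTheory Real Set Filter Topology

noncomputable section

/-- `d`-dimensional Euclidean space. -/
abbrev Rd (d : ℕ) : Type := EuclideanSpace ℝ (Fin d)

/-- `J_p(τ) = |τ|^{p-2} τ`. -/
def Jp (p τ : ℝ) : ℝ := |τ| ^ (p - 2) * τ

/-- The kernel exponent `d + s p`. -/
def kexp (d : ℕ) (s p : ℝ) : ℝ := (d : ℝ) + s * p

/-- The integrand of the tail norm. -/
def tailKer (d : ℕ) (s p : ℝ) (w : Rd d → ℝ) (x : Rd d) : ℝ :=
  |w x| ^ (p - 1) / (1 + ‖x‖ ^ kexp d s p)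

/-- Membership in the tail space `L^{p-1}_{sp}(ℝ^d)`. -/
def MemTailSpace (d : ℕ) (s p : ℝ) (w : Rd d → ℝ) : Prop :=
  MeasureTheory.Integrable (tailKer d s p w)

/-- The tail norm `‖w‖_{L^{p-1}_{sp}}`. -/
def tailNorm (d : ℕ) (s p : ℝ) (w : Rd d → ℝ) : ℝ :=
  (∫ x, tailKer d s p w x) ^ (1 / (p - 1))

/-- Parabolic cylinder `Q_r(x₀,t₀) = B_r(x₀) × (t₀ - r², t₀]`. -/
def pCyl (d : ℕ) (x₀ : Rd d) (t₀ r : ℝ) : Set (Rd d × ℝ) :=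
  Metric.ball x₀ r ×ˢ Ioc (t₀ - r ^ 2) t₀

/-- The principal value defining `(-Δ_p)^s u (x)` exists and equals `L`. -/
def HasFracPLap (d : ℕ) (s p : ℝ) (u : Rd d → ℝ) (x : Rd d) (L : ℝ) : Prop :=
  Filter.Tendsto (fun ε : ℝ =>
      ∫ y in {y : Rd d | ε ≤ ‖y - x‖}, Jp p (u x - u y) / ‖x - y‖ ^ kexp d s p)
    (𝓝[>] (0 : ℝ)) (𝓝 L)

/-- Gagliardo-type energy pairing `E(u, φ)`. -/
def energyPairing (d : ℕ) (s p : ℝ) (u φ : Rd d → ℝ) : ℝ :=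
  ∫ x : Rd d, ∫ y : Rd d, Jp p (u x - u y) * (φ x - φ y) / ‖x - y‖ ^ kexp d s p

/-- Admissible nonnegative smooth test functions spatially supported in `K`. -/
structure IsTestFun (d : ℕ) (K : Set (Rd d)) (φ : Rd d → ℝ → ℝ) : Prop where
  smooth : ContDiff ℝ (⊤ : ℕ∞) (fun q : Rd d × ℝ => φ q.1 q.2)
  nonneg : ∀ x t, 0 ≤ φ x t
  supp : ∀ t, tsupport (fun x => φ x t) ⊆ K

/-- Regularity requirements in the definition of weak (sub/super)solutions. -/
structure WeakReg (d : ℕ) (s p : ℝ) (u : Rd d → ℝ → ℝ) (Ω : Set (Rd d)) (t₁ t₂ : ℝ) : Prop where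
  meas : ∀ t ∈ Ioc t₁ t₂, AEMeasurable (fun x => u x t)
  l2loc : ∀ K : Set (Rd d), IsCompact K → K ⊆ Ω → ∀ t ∈ Ioc t₁ t₂,
      MeasureTheory.IntegrableOn (fun x => (u x t) ^ 2) K
  l2cont : ∀ K : Set (Rd d), IsCompact K → K ⊆ Ω → ∀ t₀ ∈ Ioc t₁ t₂,
      Filter.Tendsto (fun t => ∫ x in K, (u x t - u x t₀) ^ 2)
        (𝓝[Ioc t₁ t₂] t₀) (𝓝 0)
  sobolev : ∀ K : Set (Rd d), IsCompact K → K ⊆ Ω →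
      ∀ τ₁ τ₂ : ℝ, t₁ < τ₁ → τ₂ ≤ t₂ →
      MeasureTheory.IntegrableOn
        (fun q : ℝ × Rd d × Rd d =>
          |u q.2.1 q.1 - u q.2.2 q.1| ^ p / ‖q.2.1 - q.2.2‖ ^ kexp d s p)
        (Icc τ₁ τ₂ ×ˢ K ×ˢ K)
  tail : ∀ τ₁ τ₂ : ℝ, t₁ < τ₁ → τ₂ ≤ t₂ → ∃ M : ℝ, ∀ t ∈ Icc τ₁ τ₂,
      MemTailSpace d s p (fun x => u x t) ∧ tailNorm d s p (fun x => u x t) ≤ M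

/-- The quantity appearing in the weak formulation. -/
def weakForm (d : ℕ) (s p : ℝ) (u : Rd d → ℝ → ℝ) (K : Set (Rd d))
    (τ₁ τ₂ : ℝ) (φ : Rd d → ℝ → ℝ) : ℝ :=
  ((∫ x in K, u x τ₂ * φ x τ₂) - ∫ x in K, u x τ₁ * φ x τ₁)
    - (∫ t in Icc τ₁ τ₂, ∫ x in K, u x t * deriv (fun τ => φ x τ) t)
    + ∫ t in Icc τ₁ τ₂, energyPairing d s p (fun x => u x t) (fun x => φ x t)

/-- Weak supersolution of `∂_t u + (-Δ_p)^s u = 0` in `Ω × (t₁, t₂]`. -/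
def IsWeakSupersol (d : ℕ) (s p : ℝ) (u : Rd d → ℝ → ℝ) (Ω : Set (Rd d)) (t₁ t₂ : ℝ) : Prop :=
  WeakReg d s p u Ω t₁ t₂ ∧
    ∀ K : Set (Rd d), IsCompact K → K ⊆ Ω →
      ∀ τ₁ τ₂ : ℝ, t₁ < τ₁ → τ₁ ≤ τ₂ → τ₂ ≤ t₂ →
        ∀ φ : Rd d → ℝ → ℝ, IsTestFun d K φ → 0 ≤ weakForm d s p u K τ₁ τ₂ φ

/-- Weak subsolution of `∂_t u + (-Δ_p)^s u = 0` in `Ω × (t₁, t₂]`. -/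
def IsWeakSubsol (d : ℕ) (s p : ℝ) (u : Rd d → ℝ → ℝ) (Ω : Set (Rd d)) (t₁ t₂ : ℝ) : Prop :=
  WeakReg d s p u Ω t₁ t₂ ∧
    ∀ K : Set (Rd d), IsCompact K → K ⊆ Ω →
      ∀ τ₁ τ₂ : ℝ, t₁ < τ₁ → τ₁ ≤ τ₂ → τ₂ ≤ t₂ →
        ∀ φ : Rd d → ℝ → ℝ, IsTestFun d K φ → weakForm d s p u K τ₁ τ₂ φ ≤ 0

/-- Weak solution: both a weak subsolution and a weak supersolution. -/
def IsWeakSol (d : ℕ) (s p : ℝ) (u : Rd d → ℝ → ℝ) (Ω : Set (Rd d)) (t₁ t₂ : ℝ) : Prop :=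
  IsWeakSubsol d s p u Ω t₁ t₂ ∧ IsWeakSupersol d s p u Ω t₁ t₂

-- The test function `φ_r`: equal to `φ` on the cylinder and to `u` elsewhere.
open Classical in
def glue (d : ℕ) (u φ : Rd d → ℝ → ℝ) (x₀ : Rd d) (t₀ r : ℝ) (x : Rd d) (t : ℝ) : ℝ :=
  if (x, t) ∈ pCyl d x₀ t₀ r then φ x t else u x t

/-- `φ` is `C²` on the cylinder and touches `u` from above at `(x₀,t₀)`. -/
structure TouchesFromAbove (d : ℕ) (u φ : Rd d → ℝ → ℝ) (x₀ : Rd d) (t₀ r : ℝ) : Prop where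
  smooth : ContDiffOn ℝ 2 (fun q : Rd d × ℝ => φ q.1 q.2) (pCyl d x₀ t₀ r)
  touch_eq : φ x₀ t₀ = u x₀ t₀
  touch_le : ∀ q ∈ pCyl d x₀ t₀ r, u q.1 q.2 ≤ φ q.1 q.2

/-- `φ` is `C²` on the cylinder and touches `u` from below at `(x₀,t₀)`. -/
structure TouchesFromBelow (d : ℕ) (u φ : Rd d → ℝ → ℝ) (x₀ : Rd d) (t₀ r : ℝ) : Prop where
  smooth : ContDiffOn ℝ 2 (fun q : Rd d × ℝ => φ q.1 q.2) (pCyl d x₀ t₀ r)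
  touch_eq : φ x₀ t₀ = u x₀ t₀
  touch_ge : ∀ q ∈ pCyl d x₀ t₀ r, φ q.1 q.2 ≤ u q.1 q.2

/-- Viscosity subsolution of `∂_t u + (-Δ_p)^s u = 0` in `Ω × (t₁, t₂]`. -/
def IsViscositySubsol (d : ℕ) (s p : ℝ) (u : Rd d → ℝ → ℝ) (Ω : Set (Rd d)) (t₁ t₂ : ℝ) : Prop :=
  UpperSemicontinuousOn (fun q : Rd d × ℝ => u q.1 q.2) (Ω ×ˢ Ioc t₁ t₂) ∧
  (∀ τ₁ τ₂ : ℝ, t₁ < τ₁ → τ₂ ≤ t₂ → ∃ M : ℝ, ∀ t ∈ Icc τ₁ τ₂,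
      MemTailSpace d s p (fun x => u x t) ∧ tailNorm d s p (fun x => u x t) ≤ M) ∧
  ∀ (x₀ : Rd d) (t₀ r : ℝ), 0 < r → pCyl d x₀ t₀ r ⊆ Ω ×ˢ Ioc t₁ t₂ →
    ∀ φ : Rd d → ℝ → ℝ, TouchesFromAbove d u φ x₀ t₀ r →
      ∃ L : ℝ, HasFracPLap d s p (fun x => glue d u φ x₀ t₀ r x t₀) x₀ L ∧
        derivWithin (fun τ => φ x₀ τ) (Iic t₀) t₀ + L ≤ 0

/-- Viscosity supersolution of `∂_t u + (-Δ_p)^s u = 0` in `Ω × (t₁, t₂]`. -/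
def IsViscositySupersol (d : ℕ) (s p : ℝ) (u : Rd d → ℝ → ℝ) (Ω : Set (Rd d)) (t₁ t₂ : ℝ) : Prop :=
  LowerSemicontinuousOn (fun q : Rd d × ℝ => u q.1 q.2) (Ω ×ˢ Ioc t₁ t₂) ∧
  (∀ τ₁ τ₂ : ℝ, t₁ < τ₁ → τ₂ ≤ t₂ → ∃ M : ℝ, ∀ t ∈ Icc τ₁ τ₂,
      MemTailSpace d s p (fun x => u x t) ∧ tailNorm d s p (fun x => u x t) ≤ M) ∧
  ∀ (x₀ : Rd d) (t₀ r : ℝ), 0 < r → pCyl d x₀ t₀ r ⊆ Ω ×ˢ Ioc t₁ t₂ →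
    ∀ φ : Rd d → ℝ → ℝ, TouchesFromBelow d u φ x₀ t₀ r →
      ∃ L : ℝ, HasFracPLap d s p (fun x => glue d u φ x₀ t₀ r x t₀) x₀ L ∧
        0 ≤ derivWithin (fun τ => φ x₀ τ) (Iic t₀) t₀ + L

/-- Viscosity solution: both a viscosity subsolution and a viscosity supersolution. -/
def IsViscositySol (d : ℕ) (s p : ℝ) (u : Rd d → ℝ → ℝ) (Ω : Set (Rd d)) (t₁ t₂ : ℝ) : Prop :=
  IsViscositySubsol d s p u Ω t₁ t₂ ∧ IsViscositySupersol d s p u Ω t₁ t₂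

/-- The cone of directions `C(a)`. -/
def cone (d : ℕ) (δ₀ : ℝ) (a : Rd d) : Set (Rd d) :=
  {z : Rd d | ‖z‖ < ‖a‖ / 2 ∧ Real.sqrt (1 - δ₀ ^ 2) * (‖a‖ * ‖z‖) ≤ |(inner ℝ a z : ℝ)|}

/-- The strictly concave Lipschitz modulus `ω̃(r) = r + r / (20 log (r/4))`. -/
def tildeOmega (r : ℝ) : ℝ := r + r / (20 * Real.log (r / 4))

/-- Inf-convolution of `u` with parameter `ε` over `ℝ^d × (t₁,t₂]`. -/
def infConv (d : ℕ) (ε t₁ t₂ : ℝ) (u : Rd d → ℝ → ℝ) (x : Rd d) (t : ℝ) : ℝ :=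
  ⨅ q : Rd d × (Ioc t₁ t₂), u q.1 (q.2 : ℝ) + (‖q.1 - x‖ ^ 2 + |t - (q.2 : ℝ)|) / ε

namespace Aux

variable {p : ℝ}

lemma jp_zero (p : ℝ) : Jp p 0 = 0 := by simp [Jp]

lemma jp_neg (p t : ℝ) : Jp p (-t) = -Jp p t := by simp [Jp]

lemma jp_of_nonneg (hp : 2 ≤ p) (t : ℝ) (ht : 0 ≤ t) : Jp p t = t ^ (p - 1) := by
  rcases eq_or_lt_of_le ht with h | h
  · rw [Jp, ← h, Real.zero_rpow (by linarith : p - 1 ≠ 0)]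
    simp
  · rw [Jp, abs_of_nonneg ht]
    have h2 : t ^ (p-2) * t = t ^ (p-2) * t ^ (1:ℝ) := by rw [Real.rpow_one]
    rw [h2, ← Real.rpow_add h]
    congr 1; ring

lemma jp_abs (hp : 2 ≤ p) (t : ℝ) : |Jp p t| = |t| ^ (p - 1) := by
  rcases le_total 0 t with h | h
  · rw [jp_of_nonneg hp t h, abs_of_nonneg h, abs_of_nonneg (Real.rpow_nonneg h _)]
  · rw [show t = -(-t) by ring, jp_neg, abs_neg, abs_neg,
      jp_of_nonneg hp (-t) (by linarith), abs_of_nonneg (by linarith : (0:ℝ) ≤ -t),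
      abs_of_nonneg (Real.rpow_nonneg (by linarith : (0:ℝ) ≤ -t) _)]

lemma jp_mono (hp : 2 ≤ p) : Monotone (Jp p) := by
  have hp1 : (0:ℝ) ≤ p - 1 := by linarith
  intro a b hab
  rcases le_total 0 a with ha | ha
  · rw [jp_of_nonneg hp a ha, jp_of_nonneg hp b (le_trans ha hab)]
    exact Real.rpow_le_rpow ha hab hp1
  · rcases le_total 0 b with hb | hb
    · rw [jp_of_nonneg hp b hb]
      calc Jp p a = -Jp p (-a) := by rw [← jp_neg]; ring_nf
        _ ≤ 0 := by
            rw [jp_of_nonneg hp (-a) (by linarith)]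
            simpa using Real.rpow_nonneg (by linarith : (0:ℝ) ≤ -a) (p-1)
        _ ≤ b ^ (p - 1) := Real.rpow_nonneg hb _
    · have : Jp p a = -Jp p (-a) := by rw [← jp_neg]; ring_nf
      rw [this]
      have : Jp p b = -Jp p (-b) := by rw [← jp_neg]; ring_nf
      rw [this, neg_le_neg_iff, jp_of_nonneg hp (-a) (by linarith),
        jp_of_nonneg hp (-b) (by linarith)]
      exact Real.rpow_le_rpow (by linarith) (by linarith) hp1

lemma jp_continuous (hp : 2 ≤ p) : Continuous (Jp p) := by
  rcases eq_or_lt_of_le hp with h | h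
  · have : Jp p = fun t => t := by
      funext t; rw [Jp, ← h]; simp
    rw [this]; exact continuous_id
  · have habs : Continuous fun t : ℝ => |t| ^ (p - 2) := by
      rw [continuous_iff_continuousAt]
      intro t
      exact (Real.continuousAt_rpow_const _ _ (Or.inr (by linarith))).comp
        continuous_abs.continuousAt
    exact habs.mul continuous_id

lemma jp_hasDerivAt (hp : 2 ≤ p) (t : ℝ) :
    HasDerivAt (Jp p) ((p - 1) * |t| ^ (p - 2)) t := by
  rcases eq_or_lt_of_le hp with h | h
  · have : Jp p = fun t => t := by
      funext t; rw [Jp, ← h]; simp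
    rw [this, ← h]
    norm_num
    exact hasDerivAt_id t
  -- p > 2
  have key : ∀ t : ℝ, 0 < t → HasDerivAt (Jp p) ((p - 1) * |t| ^ (p - 2)) t := by
    intro t ht
    have h1 : HasDerivAt (fun x : ℝ => x ^ (p - 1)) ((p - 1) * t ^ (p - 1 - 1)) t :=
      Real.hasDerivAt_rpow_const (Or.inl (ne_of_gt ht))
    have h2 : (fun x : ℝ => x ^ (p - 1)) =ᶠ[𝓝 t] Jp p := by
      filter_upwards [Ioi_mem_nhds ht] with x hx
      rw [Jp, abs_of_pos hx]
      have h2' : x ^ (p-2) * x = x ^ (p-2) * x ^ (1:ℝ) := by rw [Real.rpow_one]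
      rw [h2', ← Real.rpow_add hx]
      congr 1; ring
    have h4 := h1.congr_of_eventuallyEq h2.symm
    rw [show p - 1 - 1 = p - 2 by ring] at h4
    have h5 : t ^ (p - 2) = |t| ^ (p - 2) := by rw [abs_of_pos ht]
    rwa [h5] at h4
  rcases lt_trichotomy t 0 with ht | ht | ht
  · have h0 := key (-t) (by linarith)
    have h1 : HasDerivAt (fun x : ℝ => -Jp p (-x)) ((p - 1) * |(-t)| ^ (p - 2)) t := by
      have := (h0.comp t (hasDerivAt_neg t)).neg
      simp only [mul_neg, mul_one, neg_neg] at this; exact this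
    have h2 : (fun x : ℝ => -Jp p (-x)) = Jp p := by
      funext x; rw [jp_neg]; ring
    rw [h2, abs_neg] at h1
    exact h1
  · subst ht
    rw [abs_zero, Real.zero_rpow (by linarith : p - 2 ≠ 0), mul_zero]
    rw [hasDerivAt_iff_tendsto_slope]
    have h2 : ∀ x : ℝ, x ≠ 0 → slope (Jp p) 0 x = |x| ^ (p - 2) := by
      intro x hx
      rw [slope_def_field, Jp, jp_zero]
      field_simp
      ring
    have h3 : Tendsto (fun x : ℝ => |x| ^ (p - 2)) (𝓝[≠] (0:ℝ)) (𝓝 0) := by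
      have : ContinuousAt (fun x : ℝ => |x| ^ (p - 2)) 0 :=
        (Real.continuousAt_rpow_const _ _ (Or.inr (by linarith))).comp
          continuous_abs.continuousAt
      have := this.continuousWithinAt (s := {(0:ℝ)}ᶜ)
      simpa [ContinuousWithinAt, Real.zero_rpow (by linarith : p - 2 ≠ 0)] using this
    exact h3.congr' (by filter_upwards [self_mem_nhdsWithin] with x hx; exact (h2 x hx).symm)
  · exact key t ht

lemma jp_lipschitz (hp : 2 ≤ p) {a b M : ℝ} (ha : |a| ≤ M) (hb : |b| ≤ M) :
    |Jp p a - Jp p b| ≤ (p - 1) * M ^ (p - 2) * |a - b| := by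
  have hM : 0 ≤ M := le_trans (abs_nonneg a) ha
  have hbound : ∀ t ∈ uIcc b a, ‖(p - 1) * |t| ^ (p - 2)‖ ≤ (p - 1) * M ^ (p - 2) := by
    intro t ht
    have htM : |t| ≤ M := by
      rcases mem_uIcc.1 ht with ⟨h1, h2⟩ | ⟨h1, h2⟩ <;> exact (abs_le_max_abs_abs h1 h2).trans (by
        simp only [max_le_iff] <;> constructor <;> assumption)
    have hp1 : (0:ℝ) ≤ p - 1 := by linarith
    rw [Real.norm_eq_abs, abs_of_nonneg (by positivity)]
    have := Real.rpow_le_rpow (abs_nonneg t) htM (by linarith : (0:ℝ) ≤ p - 2)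
    nlinarith [Real.rpow_nonneg (abs_nonneg t) (p-2)]
  have := Convex.norm_image_sub_le_of_norm_hasDerivWithin_le
    (f := Jp p) (f' := fun t => (p - 1) * |t| ^ (p - 2)) (s := uIcc b a)
    (fun t _ => (jp_hasDerivAt hp t).hasDerivWithinAt) hbound (convex_uIcc b a)
    left_mem_uIcc right_mem_uIcc
  simpa [Real.norm_eq_abs] using this





lemma measurable_rpow_norm_sub {d : ℕ} (x₀ : EuclideanSpace ℝ (Fin d)) (e : ℝ) :
    Measurable (fun y : EuclideanSpace ℝ (Fin d) => ‖y - x₀‖ ^ e) := by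
  fun_prop

lemma integrableOn_rpow_norm_ball {d : ℕ} (hd : 0 < d) {e R : ℝ} (he : -(d:ℝ) < e) (hR : 0 < R) :
    IntegrableOn (fun y : EuclideanSpace ℝ (Fin d) => ‖y‖ ^ e) (Metric.ball 0 R) := by
  have hmeas : Measurable (fun y : EuclideanSpace ℝ (Fin d) => ‖y‖ ^ e) := by
    simpa using measurable_rpow_norm_sub (0 : EuclideanSpace ℝ (Fin d)) e
  have hfin : volume (Metric.ball (0 : EuclideanSpace ℝ (Fin d)) R) < ⊤ :=
    measure_ball_lt_top
  rcases le_or_gt 0 e with he0 | he0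
  · -- bounded case
    refine Integrable.mono' (g := fun _ => R ^ e)
      ((integrableOn_const_iff (C := R ^ e)).2 (Or.inr hfin)) (hmeas.aestronglyMeasurable)
      ?_
    rw [ae_restrict_iff' measurableSet_ball]
    filter_upwards with y hy
    rw [Real.norm_eq_abs, abs_of_nonneg (Real.rpow_nonneg (norm_nonneg _) _)]
    exact Real.rpow_le_rpow (norm_nonneg _) (le_of_lt (mem_ball_zero_iff.1 hy)) he0
  · -- layer cake case
    constructor
    · exact hmeas.aestronglyMeasurable
    rw [hasFiniteIntegral_iff_norm]
    have hnn : ∀ y : EuclideanSpace ℝ (Fin d), 0 ≤ ‖y‖ ^ e :=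
      fun y => Real.rpow_nonneg (norm_nonneg _) _
    have heq : ∀ y : EuclideanSpace ℝ (Fin d), ENNReal.ofReal ‖‖y‖ ^ e‖
        = ENNReal.ofReal (‖y‖ ^ e) := by
      intro y; rw [Real.norm_eq_abs, abs_of_nonneg (hnn y)]
    simp only [heq]
    rw [lintegral_eq_lintegral_meas_le _ (Eventually.of_forall hnn) hmeas.aemeasurable]
    set μr := volume.restrict (Metric.ball (0 : EuclideanSpace ℝ (Fin d)) R) with hμr
    have hsub : ∀ t : ℝ, 0 < t →
        {a : EuclideanSpace ℝ (Fin d) | t ≤ ‖a‖ ^ e} ⊆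
          Metric.closedBall 0 (t ^ e⁻¹) := by
      intro t ht a ha
      simp only [mem_setOf_eq] at ha
      have hane : a ≠ 0 := by
        intro h
        rw [h, norm_zero, Real.zero_rpow (ne_of_lt he0)] at ha
        linarith
      have hna : 0 < ‖a‖ := norm_pos_iff.2 hane
      have h1 : (‖a‖ ^ e) ^ e⁻¹ ≤ t ^ e⁻¹ :=
        Real.rpow_le_rpow_of_nonpos ht ha (le_of_lt (inv_neg''.2 he0))
      rw [← Real.rpow_mul (norm_nonneg a), mul_inv_cancel₀ (ne_of_lt he0), Real.rpow_one] at h1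
      exact mem_closedBall_zero_iff.2 h1
    have hmb : ∀ t : ℝ, 0 < t → μr {a | t ≤ ‖a‖ ^ e} ≤
        ENNReal.ofReal (t ^ ((d:ℝ)/e)) * volume (Metric.ball (0 : EuclideanSpace ℝ (Fin d)) 1) := by
      intro t ht
      calc μr {a | t ≤ ‖a‖ ^ e} ≤ volume (Metric.closedBall (0 : EuclideanSpace ℝ (Fin d)) (t ^ e⁻¹)) :=
            le_trans (Measure.restrict_le_self _) (measure_mono (hsub t ht))
        _ = ENNReal.ofReal ((t ^ e⁻¹) ^ Module.finrank ℝ (EuclideanSpace ℝ (Fin d))) *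
              volume (Metric.ball (0 : EuclideanSpace ℝ (Fin d)) 1) :=
            Measure.addHaar_closedBall _ _ (Real.rpow_nonneg ht.le _)
        _ = ENNReal.ofReal (t ^ ((d:ℝ)/e)) * volume (Metric.ball (0 : EuclideanSpace ℝ (Fin d)) 1) := by
            congr 2
            rw [finrank_euclideanSpace_fin, ← Real.rpow_natCast (t ^ e⁻¹) d,
              ← Real.rpow_mul ht.le]
            congr 1
            field_simp
    calc ∫⁻ t in Ioi (0:ℝ), μr {a | t ≤ ‖a‖ ^ e}
        ≤ ∫⁻ t in Ioc (0:ℝ) 1 ∪ Ioi 1, μr {a | t ≤ ‖a‖ ^ e} :=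
          lintegral_mono_set Ioi_subset_Ioc_union_Ioi
      _ ≤ (∫⁻ t in Ioc (0:ℝ) 1, μr {a | t ≤ ‖a‖ ^ e}) + ∫⁻ t in Ioi 1, μr {a | t ≤ ‖a‖ ^ e} :=
          lintegral_union_le _ _ _
      _ < ⊤ := by
          refine ENNReal.add_lt_top.2 ⟨?_, ?_⟩
          · calc (∫⁻ t in Ioc (0:ℝ) 1, μr {a | t ≤ ‖a‖ ^ e})
                ≤ ∫⁻ _ in Ioc (0:ℝ) 1, volume (Metric.ball (0 : EuclideanSpace ℝ (Fin d)) R) := by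
                  refine lintegral_mono (fun t => ?_)
                  exact le_trans (measure_mono (subset_univ _))
                    (le_of_eq (Measure.restrict_apply_univ _))
              _ < ⊤ := by
                  rw [setLIntegral_const]
                  exact ENNReal.mul_lt_top hfin (by simp)
          · calc (∫⁻ t in Ioi (1:ℝ), μr {a | t ≤ ‖a‖ ^ e})
                ≤ ∫⁻ t in Ioi (1:ℝ), ENNReal.ofReal (t ^ ((d:ℝ)/e)) *
                    volume (Metric.ball (0 : EuclideanSpace ℝ (Fin d)) 1) := by
                  refine setLIntegral_mono' measurableSet_Ioi (fun t ht => ?_)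
                  exact hmb t (lt_trans one_pos ht)
              _ = (∫⁻ t in Ioi (1:ℝ), ENNReal.ofReal (t ^ ((d:ℝ)/e))) *
                    volume (Metric.ball (0 : EuclideanSpace ℝ (Fin d)) 1) :=
                  lintegral_mul_const' _ _ measure_ball_lt_top.ne
              _ < ⊤ := by
                  refine ENNReal.mul_lt_top ?_ measure_ball_lt_top
                  refine IntegrableOn.setLIntegral_lt_top ?_
                  refine integrableOn_Ioi_rpow_of_lt ?_ one_pos
                  rw [div_lt_iff_of_neg he0]
                  linarith

lemma integrableOn_rpow_norm_sub_ball {d : ℕ} (hd : 0 < d) {e R : ℝ} (he : -(d:ℝ) < e)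
    (hR : 0 < R) (x₀ : Rd d) :
    IntegrableOn (fun y : Rd d => ‖y - x₀‖ ^ e) (Metric.ball x₀ R) := by
  have h := integrableOn_rpow_norm_ball hd he hR
  rw [← integrable_indicator_iff measurableSet_ball] at h ⊢
  have h2 := h.comp_sub_right x₀
  have h3 : (fun y : Rd d => (Metric.ball (0:Rd d) R).indicator (fun z => ‖z‖ ^ e) (y - x₀))
      = (Metric.ball x₀ R).indicator (fun y => ‖y - x₀‖ ^ e) := by
    funext y
    by_cases hy : y ∈ Metric.ball x₀ R
    · rw [indicator_of_mem hy, indicator_of_mem]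
      rw [mem_ball_zero_iff]
      rw [Metric.mem_ball, dist_eq_norm] at hy
      exact hy
    · rw [indicator_of_notMem hy, indicator_of_notMem]
      rw [mem_ball_zero_iff]
      rw [Metric.mem_ball, dist_eq_norm] at hy
      exact hy
  rwa [h3] at h2

end Aux

open Aux

section Core

variable {d : ℕ} {s p : ℝ}

set_option maxHeartbeats 2000000 in
theorem core (hd : 1 ≤ d) (hs : s ∈ Ioo (0:ℝ) 1) (hp : 2 ≤ p)
    (u φ : Rd d → ℝ → ℝ) (x₀ : Rd d) (t₀ r : ℝ) (hr : 0 < r)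
    (htouch : TouchesFromAbove d u φ x₀ t₀ r)
    (hvis : ∀ ρ : ℝ, 0 < ρ → ρ ≤ r →
      ∃ L : ℝ, HasFracPLap d s p (fun x => glue d u φ x₀ t₀ ρ x t₀) x₀ L ∧
        derivWithin (fun τ => φ x₀ τ) (Iic t₀) t₀ + L ≤ 0) :
    ∃ L : ℝ, HasFracPLap d s p (fun x => u x t₀) x₀ L ∧
      derivWithin (fun τ => φ x₀ τ) (Iic t₀) t₀ + L ≤ 0 := by
  classical
  obtain ⟨hs0, hs1⟩ := hs
  have hd0 : 0 < d := hd
  set κ : ℝ := kexp d s p with hκdef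
  have hκd : (d:ℝ) < κ := by
    rw [hκdef, kexp]; nlinarith
  have hκ0 : 0 < κ := lt_of_le_of_lt (by positivity) hκd
  set D : ℝ := derivWithin (fun τ => φ x₀ τ) (Iic t₀) t₀ with hD
  have hc : φ x₀ t₀ = u x₀ t₀ := htouch.touch_eq
  set c : ℝ := u x₀ t₀ with hcdef
  set f : Rd d → ℝ := fun y => Jp p (c - u y t₀) / ‖x₀ - y‖ ^ κ with hf
  set F : ℝ → Rd d → ℝ := fun ρ y => Jp p (c - glue d u φ x₀ t₀ ρ y t₀) / ‖x₀ - y‖ ^ κ with hFdef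
  set E : ℝ → Set (Rd d) := fun ε => {y : Rd d | ε ≤ ‖y - x₀‖} with hE
  -- basic facts about glue
  have hglue : ∀ ρ : ℝ, 0 < ρ → ∀ y : Rd d,
      glue d u φ x₀ t₀ ρ y t₀ = if y ∈ Metric.ball x₀ ρ then φ y t₀ else u y t₀ := by
    intro ρ hρ y
    by_cases h : y ∈ Metric.ball x₀ ρ
    · rw [if_pos h]
      unfold glue
      rw [if_pos]
      exact Set.mem_prod.2 ⟨h, ⟨sub_lt_self _ (by positivity), le_refl _⟩⟩
    · rw [if_neg h]
      unfold glue
      rw [if_neg]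
      intro hcon
      exact h (Set.mem_prod.1 hcon).1
  have hgluex₀ : ∀ ρ : ℝ, 0 < ρ → glue d u φ x₀ t₀ ρ x₀ t₀ = c := by
    intro ρ hρ
    rw [hglue ρ hρ, if_pos (Metric.mem_ball_self hρ), hc]
  -- restated viscosity hypothesis
  have hvis' : ∀ ρ : ℝ, 0 < ρ → ρ ≤ r →
      ∃ L : ℝ, Tendsto (fun ε : ℝ => ∫ y in E ε, F ρ y) (𝓝[>] (0:ℝ)) (𝓝 L) ∧ D + L ≤ 0 := by
    intro ρ h1 h2
    obtain ⟨L, hL, hI⟩ := hvis ρ h1 h2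
    refine ⟨L, ?_, hI⟩
    have heq : ∀ ε : ℝ,
        (∫ y in {y : Rd d | ε ≤ ‖y - x₀‖},
          Jp p ((fun x => glue d u φ x₀ t₀ ρ x t₀) x₀ - (fun x => glue d u φ x₀ t₀ ρ x t₀) y)
            / ‖x₀ - y‖ ^ kexp d s p)
        = ∫ y in E ε, F ρ y := by
      intro ε
      refine setIntegral_congr_fun ?_ (fun y _ => ?_)
      · exact (isClosed_le continuous_const ((continuous_id.sub continuous_const).norm)).measurableSet
      · simp only [hFdef]
        rw [hgluex₀ ρ h1]
    exact Filter.Tendsto.congr heq hL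
  have hEmeas : ∀ ε : ℝ, MeasurableSet (E ε) := fun ε =>
    (isClosed_le continuous_const ((continuous_id.sub continuous_const).norm)).measurableSet
  have hFf : ∀ ρ : ℝ, 0 < ρ → ∀ y : Rd d, y ∉ Metric.ball x₀ ρ → F ρ y = f y := by
    intro ρ hρ y hy
    simp only [hFdef, hf]
    rw [hglue ρ hρ, if_neg hy]
  have hEF : ∀ ρ ε : ℝ, 0 < ρ → ρ ≤ ε → EqOn (F ρ) f (E ε) := by
    intro ρ ε h1 h2 y hy
    refine hFf ρ h1 y ?_
    rw [Metric.mem_ball, dist_eq_norm]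
    exact not_lt.2 (le_trans h2 hy)
  have htle : ∀ y : Rd d, y ∈ Metric.ball x₀ r → u y t₀ ≤ φ y t₀ := by
    intro y hy
    exact htouch.touch_le (y, t₀)
      (Set.mem_prod.2 ⟨hy, ⟨sub_lt_self _ (by positivity), le_refl _⟩⟩)
  have hFmono : ∀ ρ' ρ : ℝ, 0 < ρ' → ρ' ≤ ρ → ρ ≤ r → ∀ y : Rd d, F ρ y ≤ F ρ' y := by
    intro ρ' ρ h1 h2 h3 y
    have hnum : Jp p (c - glue d u φ x₀ t₀ ρ y t₀) ≤ Jp p (c - glue d u φ x₀ t₀ ρ' y t₀) := by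
      apply jp_mono hp
      apply sub_le_sub_left
      rw [hglue ρ (lt_of_lt_of_le h1 h2) y, hglue ρ' h1 y]
      by_cases hy' : y ∈ Metric.ball x₀ ρ'
      · rw [if_pos hy', if_pos (Metric.ball_subset_ball h2 hy')]
      · rw [if_neg hy']
        by_cases hy : y ∈ Metric.ball x₀ ρ
        · rw [if_pos hy]
          exact htle y (Metric.ball_subset_ball h3 hy)
        · rw [if_neg hy]
    simp only [hFdef]
    exact div_le_div_of_nonneg_right hnum (Real.rpow_nonneg (norm_nonneg _) κ)
  -- main case split on integrability of f near x₀
  by_cases hInt : ∀ ε : ℝ, 0 < ε → IntegrableOn f (E ε) volume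
  case neg =>
    -- non-integrable case : everything is junk 0
    push_neg at hInt
    obtain ⟨ε₀, hε₀pos, hε₀⟩ := hInt
    have hnotint : ∀ ε : ℝ, 0 < ε → ε ≤ ε₀ → ¬ IntegrableOn f (E ε) volume := by
      intro ε h1 h2 hcon
      exact hε₀ (hcon.mono_set (fun y hy => le_trans h2 hy))
    set ρ : ℝ := min ε₀ r / 2 with hρdef
    have hmin : 0 < min ε₀ r := lt_min hε₀pos hr
    have hρpos : 0 < ρ := by rw [hρdef]; linarith
    have hρr : ρ ≤ r := by
      have := min_le_right ε₀ r
      rw [hρdef]; linarith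
    have hρε₀ : ρ < ε₀ := by
      have := min_le_left ε₀ r
      rw [hρdef]; linarith
    obtain ⟨L₀, hT₀, hI₀⟩ := hvis' ρ hρpos hρr
    have hFnot : ∀ ε : ℝ, 0 < ε → ε < ε₀ → ¬ IntegrableOn (F ρ) (E ε) volume := by
      intro ε h1 h2 hcon
      have h3 : IntegrableOn (F ρ) (E (max ε ρ)) volume :=
        hcon.mono_set (fun y hy => le_trans (le_max_left ε ρ) hy)
      have h4 : IntegrableOn f (E (max ε ρ)) volume :=
        h3.congr_fun (hEF ρ (max ε ρ) hρpos (le_max_right ε ρ)) (hEmeas _)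
      exact hnotint (max ε ρ) (lt_of_lt_of_le h1 (le_max_left ε ρ))
        (max_le h2.le hρε₀.le) h4
    have hIg0 : ∀ᶠ ε in 𝓝[>] (0:ℝ), (∫ y in E ε, F ρ y) = 0 := by
      filter_upwards [Ioo_mem_nhdsGT_of_mem (⟨le_refl (0:ℝ), hε₀pos⟩ : (0:ℝ) ∈ Ico (0:ℝ) ε₀)]
        with ε hε using integral_undef (hFnot ε hε.1 hε.2)
    have hL₀0 : L₀ = 0 :=
      tendsto_nhds_unique (Filter.Tendsto.congr' hIg0 hT₀) tendsto_const_nhds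
    refine ⟨0, ?_, by rw [hL₀0] at hI₀; simpa using hI₀⟩
    have hI0 : ∀ᶠ ε in 𝓝[>] (0:ℝ), (0:ℝ) = ∫ y in E ε, f y := by
      filter_upwards [Ioo_mem_nhdsGT_of_mem (⟨le_refl (0:ℝ), hε₀pos⟩ : (0:ℝ) ∈ Ico (0:ℝ) ε₀)]
        with ε hε using (integral_undef (hnotint ε hε.1 hε.2.le)).symm
    exact Filter.Tendsto.congr' hI0 tendsto_const_nhds
  case pos =>
    -- smoothness of the spatial slice
    set ψ : Rd d → ℝ := fun y => φ y t₀ with hψdef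
    have hψ : ContDiffOn ℝ 2 ψ (Metric.ball x₀ r) := by
      have hmap : Set.MapsTo (fun y : Rd d => (y, t₀)) (Metric.ball x₀ r) (pCyl d x₀ t₀ r) := by
        intro y hy
        exact Set.mem_prod.2 ⟨hy, ⟨sub_lt_self _ (by positivity), le_refl _⟩⟩
      have hin : ContDiff ℝ 2 (fun y : Rd d => (y, t₀)) := contDiff_id.prodMk contDiff_const
      exact htouch.smooth.comp hin.contDiffOn hmap
    have hx₀r : x₀ ∈ Metric.ball x₀ r := Metric.mem_ball_self hr
    have hψat : ContDiffAt ℝ 2 ψ x₀ := hψ.contDiffAt (Metric.isOpen_ball.mem_nhds hx₀r)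
    have hD2 : ContDiffAt ℝ 1 (fderiv ℝ ψ) x₀ := hψat.fderiv_right (by norm_num)
    obtain ⟨K, t, ht, hlip⟩ := hD2.exists_lipschitzOnWith
    obtain ⟨δ₁, hδ₁pos, hδ₁⟩ :=
      Metric.mem_nhds_iff.1 (inter_mem ht (Metric.isOpen_ball.mem_nhds hx₀r))
    set ε₁ : ℝ := min (δ₁ / 2) (r / 2) with hε₁def
    have hε₁pos : 0 < ε₁ := lt_min (by linarith) (by linarith)
    have hε₁r : ε₁ ≤ r := le_trans (min_le_right _ _) (by linarith)
    have hε₁r' : ε₁ < r := lt_of_le_of_lt (min_le_right _ _) (by linarith)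
    have hε₁ball : Metric.closedBall x₀ ε₁ ⊆ t ∩ Metric.ball x₀ r :=
      subset_trans
        (Metric.closedBall_subset_ball (lt_of_le_of_lt (min_le_left _ _) (by linarith))) hδ₁
    have hball₁ : Metric.closedBall x₀ ε₁ ⊆ Metric.ball x₀ r :=
      hε₁ball.trans inter_subset_right
    have ht₁ : Metric.closedBall x₀ ε₁ ⊆ t := hε₁ball.trans inter_subset_left
    set Dψ := fderiv ℝ ψ x₀ with hDψdef
    have hdiffat : ∀ w ∈ Metric.ball x₀ r, DifferentiableAt ℝ ψ w := fun w hw =>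
      (hψ.contDiffAt (Metric.isOpen_ball.mem_nhds hw)).differentiableAt (by norm_num)
    -- second order Taylor estimate
    have hTaylor : ∀ y ∈ Metric.closedBall x₀ ε₁,
        |ψ y - ψ x₀ - Dψ (y - x₀)| ≤ (K : ℝ) * (‖y - x₀‖ * ‖y - x₀‖) := by
      intro y hy
      set g : Rd d → ℝ := fun w => ψ w - Dψ w with hg
      have hsub1 : Metric.closedBall x₀ ‖y - x₀‖ ⊆ Metric.closedBall x₀ ε₁ :=
        Metric.closedBall_subset_closedBall (by
          rw [Metric.mem_closedBall, dist_eq_norm] at hy; exact hy)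
      have hdg : ∀ w ∈ Metric.closedBall x₀ ‖y - x₀‖, DifferentiableAt ℝ g w := by
        intro w hw
        exact (hdiffat w (hball₁ (hsub1 hw))).sub (Dψ.differentiableAt)
      have hbound : ∀ w ∈ Metric.closedBall x₀ ‖y - x₀‖,
          ‖fderiv ℝ g w‖ ≤ (K : ℝ) * ‖y - x₀‖ := by
        intro w hw
        have hgw : fderiv ℝ g w = fderiv ℝ ψ w - Dψ := by
          rw [hg, fderiv_fun_sub (hdiffat w (hball₁ (hsub1 hw))) (Dψ.differentiableAt), Dψ.fderiv]
        rw [hgw]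
        have h1 := hlip.dist_le_mul w (ht₁ (hsub1 hw)) x₀
          (ht₁ (Metric.mem_closedBall_self hε₁pos.le))
        rw [dist_eq_norm, dist_eq_norm] at h1
        have hw' : ‖w - x₀‖ ≤ ‖y - x₀‖ := by
          rw [Metric.mem_closedBall, dist_eq_norm] at hw; exact hw
        calc ‖fderiv ℝ ψ w - Dψ‖ ≤ (K : ℝ) * ‖w - x₀‖ := h1
          _ ≤ (K : ℝ) * ‖y - x₀‖ := mul_le_mul_of_nonneg_left hw' K.coe_nonneg
      have hkey := Convex.norm_image_sub_le_of_norm_fderiv_le hdg hbound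
        (convex_closedBall x₀ ‖y - x₀‖) (Metric.mem_closedBall_self (norm_nonneg _))
        (Metric.mem_closedBall.2 (le_of_eq (dist_eq_norm y x₀)))
      have hgy : g y - g x₀ = ψ y - ψ x₀ - Dψ (y - x₀) := by
        simp only [hg, map_sub]
        ring
      calc |ψ y - ψ x₀ - Dψ (y - x₀)| = ‖g y - g x₀‖ := by rw [hgy, Real.norm_eq_abs]
        _ ≤ (K : ℝ) * ‖y - x₀‖ * ‖y - x₀‖ := hkey
        _ = (K : ℝ) * (‖y - x₀‖ * ‖y - x₀‖) := by ring
    have hcψ : c = ψ x₀ := by rw [hψdef]; simp only; rw [hc]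
    set G : ℝ := ‖Dψ‖ with hG
    set C₁ : ℝ := G + (K : ℝ) * ε₁ + 1 with hC₁def
    have hC₁pos : 0 < C₁ := by positivity
    have hlinb : ∀ y : Rd d, |Dψ (y - x₀)| ≤ G * ‖y - x₀‖ := by
      intro y
      have := Dψ.le_opNorm (y - x₀)
      rwa [Real.norm_eq_abs] at this
    have hlina : ∀ y ∈ Metric.closedBall x₀ ε₁, |c - ψ y| ≤ C₁ * ‖y - x₀‖ := by
      intro y hy
      have h1 := hTaylor y hy
      have h2 := hlinb y
      have hyn : ‖y - x₀‖ ≤ ε₁ := by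
        rw [Metric.mem_closedBall, dist_eq_norm] at hy; exact hy
      have h3 : |c - ψ y| = |(-(ψ y - ψ x₀ - Dψ (y - x₀))) + (-(Dψ (y - x₀)))| := by
        rw [hcψ]; ring_nf
      rw [h3]
      calc |(-(ψ y - ψ x₀ - Dψ (y - x₀))) + (-(Dψ (y - x₀)))|
          ≤ |(-(ψ y - ψ x₀ - Dψ (y - x₀)))| + |(-(Dψ (y - x₀)))| := abs_add_le _ _
        _ = |ψ y - ψ x₀ - Dψ (y - x₀)| + |Dψ (y - x₀)| := by rw [abs_neg, abs_neg]
        _ ≤ (K : ℝ) * (‖y - x₀‖ * ‖y - x₀‖) + G * ‖y - x₀‖ := add_le_add h1 h2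
        _ ≤ C₁ * ‖y - x₀‖ := by
            rw [hC₁def]
            nlinarith [norm_nonneg (y - x₀), K.coe_nonneg, hyn,
              mul_nonneg (mul_nonneg K.coe_nonneg (norm_nonneg (y - x₀))) (sub_nonneg.2 hyn)]
    have hp1 : (0:ℝ) ≤ p - 1 := by linarith
    have hp2 : (0:ℝ) ≤ p - 2 := by linarith
    set C₂ : ℝ := (p - 1) * C₁ ^ (p - 2) * (K : ℝ) with hC₂def
    have hC₂0 : 0 ≤ C₂ := by
      rw [hC₂def]
      have := Real.rpow_nonneg hC₁pos.le (p - 2)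
      have := K.coe_nonneg
      positivity
    have hJpKey : ∀ y ∈ Metric.closedBall x₀ ε₁,
        |Jp p (c - ψ y) - Jp p (-(Dψ (y - x₀)))|
          ≤ C₂ * (‖y - x₀‖ ^ (p - 2) * (‖y - x₀‖ * ‖y - x₀‖)) := by
      intro y hy
      have hM : |c - ψ y| ≤ C₁ * ‖y - x₀‖ := hlina y hy
      have hMb : |(-(Dψ (y - x₀)))| ≤ C₁ * ‖y - x₀‖ := by
        rw [abs_neg]
        calc |Dψ (y - x₀)| ≤ G * ‖y - x₀‖ := hlinb y
          _ ≤ C₁ * ‖y - x₀‖ := by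
              apply mul_le_mul_of_nonneg_right _ (norm_nonneg _)
              rw [hC₁def]
              nlinarith [K.coe_nonneg, hε₁pos]
      have h1 := jp_lipschitz hp hM hMb
      have h2 : |c - ψ y - (-(Dψ (y - x₀)))| ≤ (K : ℝ) * (‖y - x₀‖ * ‖y - x₀‖) := by
        have h3 := hTaylor y hy
        have h4 : |c - ψ y - (-(Dψ (y - x₀)))| = |ψ y - ψ x₀ - Dψ (y - x₀)| := by
          rw [hcψ, ← abs_neg]; ring_nf
        rw [h4]; exact h3
      have h3 : (C₁ * ‖y - x₀‖) ^ (p - 2) = C₁ ^ (p - 2) * ‖y - x₀‖ ^ (p - 2) :=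
        Real.mul_rpow hC₁pos.le (norm_nonneg _)
      have h5 : (0:ℝ) ≤ (p - 1) * (C₁ * ‖y - x₀‖) ^ (p - 2) := by
        have := Real.rpow_nonneg (mul_nonneg hC₁pos.le (norm_nonneg (y - x₀))) (p - 2)
        positivity
      calc |Jp p (c - ψ y) - Jp p (-(Dψ (y - x₀)))|
          ≤ (p - 1) * (C₁ * ‖y - x₀‖) ^ (p - 2) * |c - ψ y - (-(Dψ (y - x₀)))| := h1
        _ ≤ (p - 1) * (C₁ * ‖y - x₀‖) ^ (p - 2) * ((K : ℝ) * (‖y - x₀‖ * ‖y - x₀‖)) :=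
            mul_le_mul_of_nonneg_left h2 h5
        _ = C₂ * (‖y - x₀‖ ^ (p - 2) * (‖y - x₀‖ * ‖y - x₀‖)) := by
            rw [h3, hC₂def]; ring
    -- annuli
    set Ann : ℝ → ℝ → Set (Rd d) :=
      fun a b => {y : Rd d | a ≤ ‖y - x₀‖ ∧ ‖y - x₀‖ < b} with hAnndef
    have hAnnMeas : ∀ a b : ℝ, MeasurableSet (Ann a b) := fun a b =>
      ((isClosed_le continuous_const
          ((continuous_id.sub continuous_const).norm)).measurableSet).inter
        (isOpen_lt ((continuous_id.sub continuous_const).norm) continuous_const).measurableSet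
    have hAnnBall : ∀ a b : ℝ, b ≤ ε₁ → Ann a b ⊆ Metric.ball x₀ ε₁ := by
      intro a b hb y hy
      rw [Metric.mem_ball, dist_eq_norm]
      exact lt_of_lt_of_le hy.2 hb
    have hEdecomp : ∀ a b : ℝ, a < b → E a = Ann a b ∪ E b := by
      intro a b hab
      ext y
      simp only [hE, hAnndef, mem_setOf_eq, mem_union]
      constructor
      · intro h
        rcases lt_or_ge ‖y - x₀‖ b with h' | h'
        · exact Or.inl ⟨h, h'⟩
        · exact Or.inr h'
      · rintro (⟨h, _⟩ | h)
        · exact h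
        · exact le_trans hab.le h
    have hEAnnDisj : ∀ a b : ℝ, Disjoint (Ann a b) (E b) := by
      intro a b
      rw [Set.disjoint_left]
      intro y hy hy'
      exact absurd hy.2 (not_lt.2 hy')
    -- generic integrability on annuli
    have hbdd_int : ∀ g : Rd d → ℝ, ContinuousOn g (Metric.ball x₀ r \ {x₀}) →
        ∀ a b : ℝ, 0 < a → b ≤ ε₁ → IntegrableOn g (Ann a b) volume := by
      intro g hg a b ha hb
      set Kab := Metric.closedBall x₀ ε₁ ∩ {y : Rd d | a ≤ ‖y - x₀‖} with hKab
      have hKcomp : IsCompact Kab := (isCompact_closedBall x₀ ε₁).inter_right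
        (isClosed_le continuous_const ((continuous_id.sub continuous_const).norm))
      have hKsub : Kab ⊆ Metric.ball x₀ r \ {x₀} := by
        intro y hy
        constructor
        · exact Metric.closedBall_subset_ball hε₁r' hy.1
        · intro h0
          rw [mem_singleton_iff] at h0
          have := hy.2
          rw [h0] at this
          simp only [mem_setOf_eq, sub_self, norm_zero] at this
          linarith
      obtain ⟨M, hM⟩ := hKcomp.exists_bound_of_continuousOn (hg.mono hKsub)
      have hsubK : Ann a b ⊆ Kab := by
        intro y hy
        refine ⟨Metric.mem_closedBall.2 ?_, hy.1⟩
        rw [dist_eq_norm]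
        exact le_trans hy.2.le hb
      refine Integrable.mono' (g := fun _ => M) ((integrableOn_const_iff (C := M)).2 (Or.inr ?_)) ?_ ?_
      · exact lt_of_le_of_lt (measure_mono (hsubK.trans inter_subset_left))
          measure_closedBall_lt_top
      · exact (hg.mono (hsubK.trans hKsub)).aestronglyMeasurable (hAnnMeas a b)
      · rw [ae_restrict_iff' (hAnnMeas a b)]
        filter_upwards with y hy using hM y (hsubK hy)
    -- the φ-integrand and its odd linear model
    set gφ : Rd d → ℝ := fun y => Jp p (c - ψ y) / ‖x₀ - y‖ ^ κ with hgφdef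
    set hterm : Rd d → ℝ := fun y => Jp p (-(Dψ (y - x₀))) / ‖x₀ - y‖ ^ κ with htermdef
    have hcontden : Continuous (fun y : Rd d => ‖x₀ - y‖ ^ κ) :=
      ((continuous_const.sub continuous_id).norm).rpow_const (fun y => Or.inr hκ0.le)
    have hdenpos : ∀ y : Rd d, y ≠ x₀ → 0 < ‖x₀ - y‖ ^ κ := by
      intro y hy
      exact Real.rpow_pos_of_pos (norm_pos_iff.2 (sub_ne_zero.2 (Ne.symm hy))) κ
    have hgφcont : ContinuousOn gφ (Metric.ball x₀ r \ {x₀}) := by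
      apply ContinuousOn.div
      · exact (jp_continuous hp).comp_continuousOn
          (continuousOn_const.sub (hψ.continuousOn.mono diff_subset))
      · exact hcontden.continuousOn
      · intro y hy
        exact ne_of_gt (hdenpos y (by
          intro h
          exact hy.2 (by rw [h]; exact rfl)))
    have htermcont : ContinuousOn hterm (Metric.ball x₀ r \ {x₀}) := by
      apply ContinuousOn.div
      · exact ((jp_continuous hp).comp
          ((Dψ.continuous.comp (continuous_id.sub continuous_const)).neg)).continuousOn
      · exact hcontden.continuousOn
      · intro y hy
        exact ne_of_gt (hdenpos y (by
          intro h
          exact hy.2 (by rw [h]; exact rfl)))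
    -- F b agrees with gφ inside the ball of radius b
    have hFgφ : ∀ b : ℝ, 0 < b → ∀ a : ℝ, EqOn (F b) gφ (Ann a b) := by
      intro b hb a y hy
      simp only [hFdef, hgφdef, hψdef]
      rw [hglue b hb, if_pos]
      rw [Metric.mem_ball, dist_eq_norm]
      exact hy.2
    -- integrability of the glued integrands on exterior domains
    have hFint : ∀ ρ : ℝ, 0 < ρ → ρ ≤ ε₁ → ∀ ε : ℝ, 0 < ε →
        IntegrableOn (F ρ) (E ε) volume := by
      intro ρ h1 h2 ε hε
      rcases le_or_gt ρ ε with hle | hlt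
      · exact (hInt ε hε).congr_fun (hEF ρ ε h1 hle).symm (hEmeas ε)
      · rw [hEdecomp ε ρ hlt]
        apply IntegrableOn.union
        · exact (hbdd_int gφ hgφcont ε ρ hε h2).congr_fun
            (fun y hy => (hFgφ ρ h1 ε hy).symm ▸ rfl) (hAnnMeas ε ρ)
        · exact (hInt ρ (lt_trans hε hlt)).congr_fun (hEF ρ ρ h1 (le_refl ρ)).symm (hEmeas ρ)
    -- choose the limits L_ρ
    choose! Lf hLfT hLfI using hvis'
    have hLmono : ∀ ρ' ρ : ℝ, 0 < ρ' → ρ' ≤ ρ → ρ ≤ ε₁ → Lf ρ ≤ Lf ρ' := by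
      intro ρ' ρ h1 h2 h3
      have hρr : ρ ≤ r := le_trans h3 hε₁r
      refine le_of_tendsto_of_tendsto (hLfT ρ (lt_of_lt_of_le h1 h2) hρr)
        (hLfT ρ' h1 (le_trans h2 hρr)) ?_
      filter_upwards [self_mem_nhdsWithin] with ε hε
      exact setIntegral_mono_on (hFint ρ (lt_of_lt_of_le h1 h2) h3 ε hε)
        (hFint ρ' h1 (le_trans h2 h3) ε hε) (hEmeas ε)
        (fun y _ => hFmono ρ' ρ h1 h2 hρr y)
    have hLset_ne : (Lf '' Ioc 0 ε₁).Nonempty := ⟨Lf ε₁, ⟨ε₁, ⟨hε₁pos, le_refl _⟩, rfl⟩⟩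
    have hLbdd : BddAbove (Lf '' Ioc 0 ε₁) := by
      refine ⟨-D, ?_⟩
      rintro x ⟨ρ, hρ, rfl⟩
      have := hLfI ρ hρ.1 (le_trans hρ.2 hε₁r)
      linarith
    set L : ℝ := sSup (Lf '' Ioc 0 ε₁) with hLdef
    have hLup : ∀ ρ : ℝ, 0 < ρ → ρ ≤ ε₁ → Lf ρ ≤ L :=
      fun ρ h1 h2 => le_csSup hLbdd ⟨ρ, ⟨h1, h2⟩, rfl⟩
    have hLD : D + L ≤ 0 := by
      have : L ≤ -D := csSup_le hLset_ne (by
        rintro x ⟨ρ, hρ, rfl⟩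
        have := hLfI ρ hρ.1 (le_trans hρ.2 hε₁r)
        linarith)
      linarith
    -- the quantitative PV bound for the smooth comparison function
    set θ : ℝ := (p - s * p) / 2 with hθdef
    have hθpos : 0 < θ := by rw [hθdef]; nlinarith
    set ee : ℝ := p - κ - θ with heedef
    have hed : -(d:ℝ) < ee := by
      rw [heedef, hκdef, kexp, hθdef]; nlinarith
    have hTmaj : IntegrableOn (fun y : Rd d => ‖y - x₀‖ ^ ee) (Metric.ball x₀ ε₁) volume :=
      integrableOn_rpow_norm_sub_ball hd0 hed hε₁pos x₀
    set T : ℝ := ∫ y in Metric.ball x₀ ε₁, ‖y - x₀‖ ^ ee with hTdef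
    have hT0 : 0 ≤ T := setIntegral_nonneg measurableSet_ball
      (fun y _ => Real.rpow_nonneg (norm_nonneg _) ee)
    set m : ℝ → ℝ := fun ε => C₂ * T * ε ^ θ with hmdef
    have hmtend : Tendsto m (𝓝[>] (0:ℝ)) (𝓝 0) := by
      have h1 : Tendsto (fun ε : ℝ => ε ^ θ) (𝓝 (0:ℝ)) (𝓝 ((0:ℝ) ^ θ)) :=
        (Real.continuousAt_rpow_const 0 θ (Or.inr hθpos.le))
      rw [Real.zero_rpow (ne_of_gt hθpos)] at h1
      have h2 := h1.const_mul (C₂ * T)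
      rw [mul_zero] at h2
      exact tendsto_nhdsWithin_of_tendsto_nhds h2
    have hAnnGφ : ∀ ε : ℝ, 0 < ε → ε ≤ ε₁ → ∀ δ : ℝ, 0 < δ → δ < ε →
        |∫ y in Ann δ ε, gφ y| ≤ m ε := by
      intro ε hε hεε₁ δ hδ hδε
      have hIg : IntegrableOn gφ (Ann δ ε) volume := hbdd_int gφ hgφcont δ ε hδ hεε₁
      have hIh : IntegrableOn hterm (Ann δ ε) volume := hbdd_int hterm htermcont δ ε hδ hεε₁
      -- oddness
      have hodd : (∫ y in Ann δ ε, hterm y) = 0 := by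
        set h₀ : Rd d → ℝ := fun z => Jp p (-(Dψ z)) / ‖z‖ ^ κ with hh₀
        have h0 : ∀ y : Rd d, hterm y = h₀ (y - x₀) := by
          intro y
          simp only [htermdef, hh₀]
          rw [norm_sub_rev]
        set A₀ : Set (Rd d) := {z : Rd d | δ ≤ ‖z‖ ∧ ‖z‖ < ε} with hA₀
        have hA₀meas : MeasurableSet A₀ :=
          ((isClosed_le continuous_const continuous_norm).measurableSet).inter
            (isOpen_lt continuous_norm continuous_const).measurableSet
        have e1 : (∫ y in Ann δ ε, hterm y) = ∫ y, (Ann δ ε).indicator hterm y :=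
          (integral_indicator (hAnnMeas δ ε)).symm
        have e2 : (fun y => (Ann δ ε).indicator hterm y)
            = fun y => A₀.indicator h₀ (y - x₀) := by
          funext y
          have hmemiff : y ∈ Ann δ ε ↔ y - x₀ ∈ A₀ := by
            simp only [hAnndef, hA₀, mem_setOf_eq]
          by_cases hy : y ∈ Ann δ ε
          · rw [indicator_of_mem hy, indicator_of_mem (hmemiff.1 hy), ← h0 y]
          · rw [indicator_of_notMem hy, indicator_of_notMem (fun hcon => hy (hmemiff.2 hcon))]
        have e3 : (∫ y : Rd d, A₀.indicator h₀ (y - x₀)) = ∫ z, A₀.indicator h₀ z :=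
          integral_sub_right_eq_self (A₀.indicator h₀) x₀
        have e4 : (∫ z, A₀.indicator h₀ z) = - ∫ z, A₀.indicator h₀ z := by
          conv_lhs => rw [← integral_neg_eq_self (A₀.indicator h₀) volume]
          have e5 : (fun z : Rd d => A₀.indicator h₀ (-z)) = fun z => -(A₀.indicator h₀ z) := by
            funext z
            by_cases hz : z ∈ A₀
            · have hz' : -z ∈ A₀ := by
                simp only [hA₀, mem_setOf_eq, norm_neg] at hz ⊢
                exact hz
              rw [indicator_of_mem hz', indicator_of_mem hz]
              simp only [hh₀]
              rw [map_neg, neg_neg, norm_neg]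
              have : Jp p (Dψ z) = -Jp p (-(Dψ z)) := by rw [jp_neg]; ring
              rw [this, neg_div]
            · have hz' : -z ∉ A₀ := by
                simp only [hA₀, mem_setOf_eq, norm_neg] at hz ⊢
                exact hz
              rw [indicator_of_notMem hz', indicator_of_notMem hz, neg_zero]
          rw [e5, integral_neg]
        have e6 : (∫ y in Ann δ ε, hterm y) = ∫ z, A₀.indicator h₀ z := by
          rw [e1, e2]; exact e3
        rw [e6]
        linarith [e4]
      -- pointwise bound on the difference
      have hmaj : IntegrableOn (fun y : Rd d => C₂ * ε ^ θ * ‖y - x₀‖ ^ ee) (Ann δ ε) volume :=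
        IntegrableOn.mono_set (hTmaj.const_mul (C₂ * ε ^ θ)) (hAnnBall δ ε hεε₁)
      have hptwise : ∀ y ∈ Ann δ ε, ‖gφ y - hterm y‖ ≤ C₂ * ε ^ θ * ‖y - x₀‖ ^ ee := by
        intro y hy
        have hyb : y ∈ Metric.closedBall x₀ ε₁ := by
          rw [Metric.mem_closedBall, dist_eq_norm]
          exact le_trans hy.2.le hεε₁
        have hz0 : 0 < ‖y - x₀‖ := lt_of_lt_of_le hδ hy.1
        have hkey := hJpKey y hyb
        have hflip : ‖x₀ - y‖ = ‖y - x₀‖ := norm_sub_rev _ _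
        have hden0 : (0:ℝ) ≤ ‖y - x₀‖ ^ κ := Real.rpow_nonneg (norm_nonneg _) κ
        rw [Real.norm_eq_abs]
        simp only [hgφdef, htermdef]
        rw [div_sub_div_same, abs_div, abs_of_nonneg (Real.rpow_nonneg (norm_nonneg _) κ), hflip]
        calc |Jp p (c - ψ y) - Jp p (-(Dψ (y - x₀)))| / ‖y - x₀‖ ^ κ
            ≤ (C₂ * (‖y - x₀‖ ^ (p - 2) * (‖y - x₀‖ * ‖y - x₀‖))) / ‖y - x₀‖ ^ κ :=
              div_le_div_of_nonneg_right hkey hden0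
          _ ≤ C₂ * ε ^ θ * ‖y - x₀‖ ^ ee := by
              set n := ‖y - x₀‖ with hn
              have h2 : n ^ (p - 2) * (n * n) = n ^ p := by
                have hnn : n * n = n ^ (2:ℝ) := by
                  rw [show (2:ℝ) = ((2:ℕ):ℝ) by norm_num, Real.rpow_natCast]
                  ring
                rw [hnn, ← Real.rpow_add hz0]
                congr 1
                ring
              rw [h2, mul_div_assoc, ← Real.rpow_sub hz0]
              have h3 : p - κ = θ + ee := by rw [heedef]; ring
              rw [h3, Real.rpow_add hz0]
              have h4 : n ^ θ ≤ ε ^ θ :=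
                Real.rpow_le_rpow (norm_nonneg _) hy.2.le hθpos.le
              have h5 : n ^ θ * n ^ ee ≤ ε ^ θ * n ^ ee :=
                mul_le_mul_of_nonneg_right h4 (Real.rpow_nonneg (norm_nonneg _) ee)
              have h6 := mul_le_mul_of_nonneg_left h5 hC₂0
              calc C₂ * (n ^ θ * n ^ ee) ≤ C₂ * (ε ^ θ * n ^ ee) := h6
                _ = C₂ * ε ^ θ * n ^ ee := by ring
      have hsub_eq : (∫ y in Ann δ ε, gφ y)
          = (∫ y in Ann δ ε, hterm y) + ∫ y in Ann δ ε, (gφ y - hterm y) := by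
        have hIsub : IntegrableOn (fun y => gφ y - hterm y) (Ann δ ε) volume := hIg.sub hIh
        rw [← integral_add hIh hIsub]
        refine setIntegral_congr_fun (hAnnMeas δ ε) (fun y _ => by ring)
      rw [hsub_eq, hodd, zero_add]
      have hnile : ‖∫ y in Ann δ ε, (gφ y - hterm y)‖
          ≤ ∫ y in Ann δ ε, C₂ * ε ^ θ * ‖y - x₀‖ ^ ee := by
        refine norm_integral_le_of_norm_le hmaj ?_
        rw [ae_restrict_iff' (hAnnMeas δ ε)]
        filter_upwards with y hy using hptwise y hy
      rw [Real.norm_eq_abs] at hnile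
      have hstep : (∫ y in Ann δ ε, C₂ * ε ^ θ * ‖y - x₀‖ ^ ee)
          ≤ ∫ y in Metric.ball x₀ ε₁, C₂ * ε ^ θ * ‖y - x₀‖ ^ ee := by
        refine setIntegral_mono_set (hTmaj.const_mul (C₂ * ε ^ θ)) ?_ ?_
        · exact Eventually.of_forall (fun y => by positivity)
        · exact (hAnnBall δ ε hεε₁).eventuallyLE
      have hval : (∫ y in Metric.ball x₀ ε₁, C₂ * ε ^ θ * ‖y - x₀‖ ^ ee) = m ε := by
        rw [hmdef]
        simp only
        rw [integral_const_mul]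
        rw [hTdef]
        ring
      linarith
    -- |I(ε) - L_ε| ≤ m ε
    have hIL : ∀ ε : ℝ, 0 < ε → ε ≤ ε₁ → |Lf ε - (∫ y in E ε, f y)| ≤ m ε := by
      intro ε hε hεε₁
      have hTε := hLfT ε hε (le_trans hεε₁ hε₁r)
      have hsplit : ∀ δ : ℝ, 0 < δ → δ < ε →
          (∫ y in E δ, F ε y) - (∫ y in E ε, f y) = ∫ y in Ann δ ε, gφ y := by
        intro δ h1 h2
        have h3 : IntegrableOn (F ε) (Ann δ ε) volume :=
          (hbdd_int gφ hgφcont δ ε h1 hεε₁).congr_fun (fun y hy => ((hFgφ ε hε δ) hy).symm)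
            (hAnnMeas δ ε)
        have h4 : IntegrableOn (F ε) (E ε) volume :=
          (hInt ε hε).congr_fun (hEF ε ε hε (le_refl ε)).symm (hEmeas ε)
        rw [hEdecomp δ ε h2, setIntegral_union (hEAnnDisj δ ε) (hEmeas ε) h3 h4]
        have h5 : (∫ y in Ann δ ε, F ε y) = ∫ y in Ann δ ε, gφ y :=
          setIntegral_congr_fun (hAnnMeas δ ε) (hFgφ ε hε δ)
        have h6 : (∫ y in E ε, F ε y) = ∫ y in E ε, f y :=
          setIntegral_congr_fun (hEmeas ε) (hEF ε ε hε (le_refl ε))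
        rw [h5, h6]
        ring
      have habs : Tendsto (fun δ : ℝ => |(∫ y in E δ, F ε y) - (∫ y in E ε, f y)|)
          (𝓝[>] (0:ℝ)) (𝓝 |Lf ε - (∫ y in E ε, f y)|) := (hTε.sub_const _).abs
      refine le_of_tendsto habs ?_
      filter_upwards [Ioo_mem_nhdsGT_of_mem (⟨le_refl (0:ℝ), hε⟩ : (0:ℝ) ∈ Ico (0:ℝ) ε)]
        with δ hδ
      rw [hsplit δ hδ.1 hδ.2]
      exact hAnnGφ ε hε hεε₁ δ hδ.1 hδ.2
    -- conclusion
    refine ⟨L, ?_, hLD⟩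
    have hfinal : Tendsto (fun ε : ℝ => ∫ y in E ε, f y) (𝓝[>] (0:ℝ)) (𝓝 L) := by
      rw [Metric.tendsto_nhds]
      intro η hη
      obtain ⟨x, hxmem, hx⟩ := exists_lt_of_lt_csSup hLset_ne
        (show L - η / 2 < L by linarith)
      obtain ⟨ρ₀, hρ₀, rfl⟩ := hxmem
      have hev1 : ∀ᶠ ε in 𝓝[>] (0:ℝ), ε < ρ₀ := by
        have : Iio ρ₀ ∈ 𝓝[>] (0:ℝ) := nhdsWithin_le_nhds (Iio_mem_nhds hρ₀.1)
        filter_upwards [this] with ε hε using hε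
      have hev2 : ∀ᶠ ε in 𝓝[>] (0:ℝ), dist (m ε) 0 < η / 2 :=
        (Metric.tendsto_nhds.1 hmtend) (η / 2) (by linarith)
      filter_upwards [hev1, hev2, self_mem_nhdsWithin] with ε h1 h2 h3
      have hεpos : (0:ℝ) < ε := h3
      have hεε₁ : ε ≤ ε₁ := le_trans h1.le hρ₀.2
      have hIL' := hIL ε hεpos hεε₁
      have hmono := hLmono ε ρ₀ hεpos h1.le hρ₀.2
      have hup := hLup ε hεpos hεε₁
      rw [Real.dist_eq, sub_zero] at h2
      have hm' : m ε < η / 2 := lt_of_le_of_lt (le_abs_self _) h2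
      rw [Real.dist_eq]
      have h5 : |(∫ y in E ε, f y) - L|
          ≤ |(∫ y in E ε, f y) - Lf ε| + |Lf ε - L| := abs_sub_le _ _ _
      have h6 : |(∫ y in E ε, f y) - Lf ε| ≤ m ε := by
        rw [abs_sub_comm]; exact hIL'
      have h7 : |Lf ε - L| < η / 2 := by
        rw [abs_sub_comm, abs_of_nonneg (by linarith : (0:ℝ) ≤ L - Lf ε)]
        linarith
      linarith
    exact hfinal


lemma hasFracPLap_neg {d : ℕ} {s p : ℝ} {w : Rd d → ℝ} {x : Rd d} {L : ℝ}
    (h : HasFracPLap d s p w x L) :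
    HasFracPLap d s p (fun y => -(w y)) x (-L) := by
  refine Filter.Tendsto.congr (fun ε => ?_) h.neg
  rw [← integral_neg]
  congr 1
  funext y
  have h1 : (fun y => -(w y)) x - (fun y => -(w y)) y = -(w x - w y) := by simp; ring
  rw [h1, Aux.jp_neg, neg_div]

end Core

/-- At a touching point the equation can be evaluated with `u` itself
in the nonlocal term. -/
theorem statement4
    (d : ℕ) (hd : 1 ≤ d) (s p : ℝ) (hs : s ∈ Ioo (0:ℝ) 1) (hp : 2 ≤ p)
    (Ω : Set (Rd d)) (hΩo : IsOpen Ω) (hΩb : Bornology.IsBounded Ω)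
    (t₁ t₂ : ℝ) (u φ : Rd d → ℝ → ℝ)
    (x₀ : Rd d) (t₀ r : ℝ) (hr : 0 < r)
    (hQ : pCyl d x₀ t₀ r ⊆ Ω ×ˢ Ioc t₁ t₂) :
    (IsViscositySubsol d s p u Ω t₁ t₂ → TouchesFromAbove d u φ x₀ t₀ r →
      ∃ L : ℝ, HasFracPLap d s p (fun x => u x t₀) x₀ L ∧
        derivWithin (fun τ => φ x₀ τ) (Iic t₀) t₀ + L ≤ 0) ∧
    (IsViscositySupersol d s p u Ω t₁ t₂ → TouchesFromBelow d u φ x₀ t₀ r →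
      ∃ L : ℝ, HasFracPLap d s p (fun x => u x t₀) x₀ L ∧
        0 ≤ derivWithin (fun τ => φ x₀ τ) (Iic t₀) t₀ + L) := by
  have hpmono : ∀ ρ : ℝ, 0 < ρ → ρ ≤ r → pCyl d x₀ t₀ ρ ⊆ pCyl d x₀ t₀ r := by
    intro ρ h1 h2
    exact Set.prod_mono (Metric.ball_subset_ball h2)
      (Ioc_subset_Ioc_left (by nlinarith))
  constructor
  · -- subsolution case
    intro hsub htouch
    refine core hd hs hp u φ x₀ t₀ r hr htouch (fun ρ h1 h2 => ?_)
    refine hsub.2.2 x₀ t₀ ρ h1 ((hpmono ρ h1 h2).trans hQ) φ ?_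
    exact ⟨htouch.smooth.mono (hpmono ρ h1 h2), htouch.touch_eq,
      fun q hq => htouch.touch_le q (hpmono ρ h1 h2 hq)⟩
  · -- supersolution case : apply the core lemma to -u, -φ
    intro hsup htouch
    have hUD : UniqueDiffWithinAt ℝ (Iic t₀) t₀ := uniqueDiffOn_Iic t₀ t₀ (mem_Iic.2 le_rfl)
    have htouch' : TouchesFromAbove d (fun x t => -u x t) (fun x t => -φ x t) x₀ t₀ r :=
      ⟨htouch.smooth.neg, by rw [htouch.touch_eq],
        fun q hq => neg_le_neg (htouch.touch_ge q hq)⟩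
    have hder : derivWithin (fun τ => -φ x₀ τ) (Iic t₀) t₀
        = -derivWithin (fun τ => φ x₀ τ) (Iic t₀) t₀ := derivWithin.neg (f := fun τ => φ x₀ τ)
    have hvis' : ∀ ρ : ℝ, 0 < ρ → ρ ≤ r →
        ∃ L : ℝ, HasFracPLap d s p
            (fun x => glue d (fun x t => -u x t) (fun x t => -φ x t) x₀ t₀ ρ x t₀) x₀ L ∧
          derivWithin (fun τ => (fun x t => -φ x t) x₀ τ) (Iic t₀) t₀ + L ≤ 0 := by
      intro ρ h1 h2
      obtain ⟨L, hL, hI⟩ := hsup.2.2 x₀ t₀ ρ h1 ((hpmono ρ h1 h2).trans hQ) φ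
        ⟨htouch.smooth.mono (hpmono ρ h1 h2), htouch.touch_eq,
          fun q hq => htouch.touch_ge q (hpmono ρ h1 h2 hq)⟩
      refine ⟨-L, ?_, ?_⟩
      · have hgl : (fun x => glue d (fun x t => -u x t) (fun x t => -φ x t) x₀ t₀ ρ x t₀)
            = fun x => -(glue d u φ x₀ t₀ ρ x t₀) := by
          funext x
          unfold glue
          by_cases h : (x, t₀) ∈ pCyl d x₀ t₀ ρ
          · rw [if_pos h, if_pos h]
          · rw [if_neg h, if_neg h]
        rw [hgl]
        exact hasFracPLap_neg hL
      · simp only [hder]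
        linarith
    obtain ⟨L, hL, hI⟩ := core hd hs hp (fun x t => -u x t) (fun x t => -φ x t)
      x₀ t₀ r hr htouch' hvis'
    refine ⟨-L, ?_, ?_⟩
    · have h2 := hasFracPLap_neg hL
      have heq : (fun y : Rd d => -((fun x => (fun x t => -u x t) x t₀) y))
          = fun x => u x t₀ := by
        funext y
        simp
      rwa [heq] at h2
    · rw [hder] at hI
      linarith

end
end

section
/- Let p > 1 and let J_p(τ) := |τ|^{p−2}τ. Then for all a, b ∈ ℝ: (i) J_p(a) − J_p(b) = (p−1) ∫₀¹ |b + τ(a−b)|^{p−2} (a−b) dτ; and (ii) there exists a constant C_p > 0, depending only on p, such that (1/C_p)(|b| + |a−b|)^{p−2} ≤ ∫₀¹ |b + τ(a−b)|^{p−2} dτ ≤ C_p (|b| + |a−b|)^{p−2}. -/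
open MeasureTheory Real Set Filter Topology

noncomputable section

private lemma s13_intInt {p : ℝ} (hp : 1 < p) (a b : ℝ) :
    IntervalIntegrable (fun x : ℝ => |x| ^ (p - 2)) volume a b := by
  have key : ∀ c : ℝ, 0 ≤ c → IntervalIntegrable (fun x : ℝ => |x| ^ (p - 2)) volume 0 c := by
    intro c hc
    refine (intervalIntegral.intervalIntegrable_rpow' (by linarith : (-1:ℝ) < p - 2)
      (a := 0) (b := c)).congr ?_
    intro x hx
    rw [uIoc_of_le hc] at hx
    simp only [abs_of_pos hx.1]
  have key2 : ∀ c : ℝ, IntervalIntegrable (fun x : ℝ => |x| ^ (p - 2)) volume 0 c := by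
    intro c
    rcases le_total 0 c with hc | hc
    · exact key c hc
    · rw [IntervalIntegrable.iff_comp_neg]
      simp only [abs_neg, neg_zero]
      exact key (-c) (by linarith)
  exact (key2 a).symm.trans (key2 b)

private lemma s13_Jp_nonneg {p : ℝ} (hp : 1 < p) {c : ℝ} (hc : 0 ≤ c) :
    Jp p c = c ^ (p - 1) := by
  rcases eq_or_lt_of_le hc with rfl | hc
  · simp [Jp, Real.zero_rpow (sub_ne_zero.mpr hp.ne')]
  · rw [Jp, abs_of_pos hc, show p - 1 = p - 2 + 1 by ring, Real.rpow_add_one hc.ne']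

private lemma s13_Jp_neg (p c : ℝ) : Jp p (-c) = -Jp p c := by
  unfold Jp; rw [abs_neg]; ring

private lemma s13_Jp_nonpos {p : ℝ} (hp : 1 < p) {c : ℝ} (hc : c ≤ 0) :
    Jp p c = -((-c) ^ (p - 1)) := by
  have h := s13_Jp_neg p (-c)
  rw [neg_neg] at h
  rw [h, s13_Jp_nonneg hp (neg_nonneg.mpr hc)]

private lemma s13_Jint {p : ℝ} (hp : 1 < p) (c : ℝ) :
    ∫ σ in (0:ℝ)..c, |σ| ^ (p - 2) = Jp p c / (p - 1) := by
  have base : ∀ c : ℝ, 0 ≤ c → ∫ σ in (0:ℝ)..c, |σ| ^ (p - 2) = c ^ (p - 1) / (p - 1) := by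
    intro c hc
    have hcg : ∀ x ∈ uIcc (0:ℝ) c, |x| ^ (p - 2) = x ^ (p - 2) := by
      intro x hx
      rw [uIcc_of_le hc] at hx
      rw [abs_of_nonneg hx.1]
    rw [intervalIntegral.integral_congr hcg, integral_rpow (Or.inl (by linarith : (-1:ℝ) < p - 2)),
      show p - 2 + 1 = p - 1 by ring, Real.zero_rpow (sub_ne_zero.mpr hp.ne'), sub_zero]
  rcases le_total 0 c with hc | hc
  · rw [base c hc, s13_Jp_nonneg hp hc]
  · have h1 : ∫ σ in (0:ℝ)..(-c), |σ| ^ (p - 2) = ∫ σ in c..(0:ℝ), |σ| ^ (p - 2) := by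
      have h := intervalIntegral.integral_comp_neg (a := (0:ℝ)) (b := -c)
        (f := fun x : ℝ => |x| ^ (p - 2))
      simpa [abs_neg] using h
    have h2 : ∫ σ in (0:ℝ)..c, |σ| ^ (p - 2) = -((-c) ^ (p - 1) / (p - 1)) := by
      rw [intervalIntegral.integral_symm c 0, ← h1, base (-c) (by linarith)]
    rw [h2, s13_Jp_nonpos hp hc]
    ring

private lemma s13_Ival {p : ℝ} (hp : 1 < p) {a b : ℝ} (hab : a ≠ b) :
    (∫ τ in (0:ℝ)..1, |b + τ * (a - b)| ^ (p - 2))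
      = (Jp p a - Jp p b) / ((p - 1) * (a - b)) := by
  have hp1 : (0:ℝ) < p - 1 := by linarith
  have hab' : a - b ≠ 0 := sub_ne_zero.mpr hab
  have h1 : (∫ τ in (0:ℝ)..1, |b + τ * (a - b)| ^ (p - 2))
      = ∫ τ in (0:ℝ)..1, (fun x : ℝ => |x| ^ (p - 2)) ((a - b) * τ + b) := by
    apply intervalIntegral.integral_congr
    intro τ _
    show |b + τ * (a - b)| ^ (p - 2) = |(a - b) * τ + b| ^ (p - 2)
    rw [show b + τ * (a - b) = (a - b) * τ + b by ring]
  have h2 := intervalIntegral.integral_comp_mul_add (a := (0:ℝ)) (b := 1)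
    (f := fun x : ℝ => |x| ^ (p - 2)) hab' b
  rw [h1, h2, smul_eq_mul]
  have h4 : (∫ x in ((a-b)*0+b)..((a-b)*1+b), |x| ^ (p - 2)) = (Jp p a - Jp p b) / (p - 1) := by
    rw [show (a-b)*0+b = b by ring, show (a-b)*1+b = a by ring]
    have hadd := intervalIntegral.integral_add_adjacent_intervals
      (s13_intInt hp b 0) (s13_intInt hp 0 a)
    rw [← hadd, intervalIntegral.integral_symm 0 b, s13_Jint hp a, s13_Jint hp b]
    ring
  rw [h4, inv_mul_eq_div, div_div]

private lemma s13_factA {p : ℝ} (hp : 1 < p) {u v : ℝ} (hv : 0 ≤ v) (huv : v ≤ u) :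
    (p - 1) / p * (u ^ (p - 2) * (u - v)) ≤ u ^ (p - 1) - v ^ (p - 1) ∧
    u ^ (p - 1) - v ^ (p - 1) ≤ p * (u ^ (p - 2) * (u - v)) := by
  have hp0 : (0:ℝ) < p := by linarith
  rcases eq_or_lt_of_le huv with rfl | hvu
  · constructor <;> simp
  have hu : 0 < u := lt_of_le_of_lt hv hvu
  set t : ℝ := v / u with ht
  have ht0 : 0 ≤ t := div_nonneg hv hu.le
  have ht1 : t < 1 := (div_lt_one hu).mpr hvu
  have hveq : v = t * u := by rw [ht]; exact (div_mul_cancel₀ v hu.ne').symm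
  have hv_pow : v ^ (p - 1) = t ^ (p - 1) * u ^ (p - 1) := by
    rw [hveq, Real.mul_rpow ht0 hu.le]
  have hu_pow : u ^ (p - 1) = u ^ (p - 2) * u := by
    rw [show p - 1 = p - 2 + 1 by ring, Real.rpow_add_one hu.ne']
  have hP : (0:ℝ) < u ^ (p - 1) := Real.rpow_pos_of_pos hu _
  have hkey : u ^ (p - 2) * (u - v) = u ^ (p - 1) * (1 - t) := by
    calc u ^ (p - 2) * (u - v) = u ^ (p - 2) * u * (1 - t) := by rw [hveq]; ring
      _ = u ^ (p - 1) * (1 - t) := by rw [← hu_pow]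
  have hclaim : (p - 1) / p * (1 - t) ≤ 1 - t ^ (p - 1) ∧ 1 - t ^ (p - 1) ≤ p * (1 - t) := by
    rcases le_or_gt 1 (p - 1) with h | h
    · have hb := one_add_mul_self_le_rpow_one_add (s := t - 1) (by linarith) h
      rw [show (1:ℝ) + (t - 1) = t by ring] at hb
      have hts : t ^ (p - 1) ≤ t := by
        rcases eq_or_lt_of_le ht0 with h0 | h0
        · rw [← h0, Real.zero_rpow (by linarith : p - 1 ≠ 0)]
        · calc t ^ (p - 1) ≤ t ^ (1:ℝ) := Real.rpow_le_rpow_of_exponent_ge h0 ht1.le h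
            _ = t := Real.rpow_one t
      have e1 : (p - 1) / p ≤ 1 := by rw [div_le_one hp0]; linarith
      have e2 : (p - 1) / p * (1 - t) ≤ 1 * (1 - t) :=
        mul_le_mul_of_nonneg_right e1 (by linarith)
      constructor
      · linarith
      · nlinarith
    · have hb := rpow_one_add_le_one_add_mul_self (s := t - 1) (by linarith)
        (by linarith : (0:ℝ) ≤ p - 1) h.le
      rw [show (1:ℝ) + (t - 1) = t by ring] at hb
      have hts : t ≤ t ^ (p - 1) := by
        rcases eq_or_lt_of_le ht0 with h0 | h0
        · rw [← h0, Real.zero_rpow (by linarith : p - 1 ≠ 0)]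
        · calc t = t ^ (1:ℝ) := (Real.rpow_one t).symm
            _ ≤ t ^ (p - 1) := Real.rpow_le_rpow_of_exponent_ge h0 ht1.le h.le
      have e1 : (p - 1) / p ≤ p - 1 := by
        rw [div_le_iff₀ hp0]; nlinarith
      have e2 : (p - 1) / p * (1 - t) ≤ (p - 1) * (1 - t) :=
        mul_le_mul_of_nonneg_right e1 (by linarith)
      constructor
      · nlinarith
      · nlinarith
  constructor
  · rw [hkey, hv_pow]
    nlinarith [mul_le_mul_of_nonneg_left hclaim.1 hP.le]
  · rw [hkey, hv_pow]
    nlinarith [mul_le_mul_of_nonneg_left hclaim.2 hP.le]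

private lemma s13_factB {p : ℝ} (hp : 1 < p) {u v : ℝ} (hu : 0 < u) (hv : 0 < v) :
    (u + v) ^ (p - 1) ≤ 2 ^ (p - 1) * (u ^ (p - 1) + v ^ (p - 1)) ∧
    u ^ (p - 1) + v ^ (p - 1) ≤ 2 * (u + v) ^ (p - 1) := by
  have hp1 : (0:ℝ) ≤ p - 1 := by linarith
  have h2p : (0:ℝ) < 2 ^ (p - 1) := Real.rpow_pos_of_pos (by norm_num) _
  constructor
  · rcases le_total u v with h | h
    · calc (u + v) ^ (p - 1) ≤ (2 * v) ^ (p - 1) :=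
          Real.rpow_le_rpow (by linarith) (by linarith) hp1
        _ = 2 ^ (p - 1) * v ^ (p - 1) := Real.mul_rpow (by norm_num) hv.le
        _ ≤ 2 ^ (p - 1) * (u ^ (p - 1) + v ^ (p - 1)) := by
            nlinarith [Real.rpow_nonneg hu.le (p - 1)]
    · calc (u + v) ^ (p - 1) ≤ (2 * u) ^ (p - 1) :=
          Real.rpow_le_rpow (by linarith) (by linarith) hp1
        _ = 2 ^ (p - 1) * u ^ (p - 1) := Real.mul_rpow (by norm_num) hu.le
        _ ≤ 2 ^ (p - 1) * (u ^ (p - 1) + v ^ (p - 1)) := by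
            nlinarith [Real.rpow_nonneg hv.le (p - 1)]
  · have h1 : u ^ (p - 1) ≤ (u + v) ^ (p - 1) :=
      Real.rpow_le_rpow hu.le (by linarith) hp1
    have h2 : v ^ (p - 1) ≤ (u + v) ^ (p - 1) :=
      Real.rpow_le_rpow hv.le (by linarith) hp1
    linarith

private lemma s13_factC (p : ℝ) {x y : ℝ} (hx : 0 < x) (hy : 0 < y)
    (h1 : x ≤ 2 * y) (h2 : y ≤ 2 * x) :
    x ^ (p - 2) ≤ 2 ^ |p - 2| * y ^ (p - 2) := by
  rcases le_or_gt 0 (p - 2) with h | h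
  · rw [abs_of_nonneg h]
    calc x ^ (p - 2) ≤ (2 * y) ^ (p - 2) := Real.rpow_le_rpow hx.le h1 h
      _ = 2 ^ (p - 2) * y ^ (p - 2) := Real.mul_rpow (by norm_num) hy.le
  · rw [abs_of_neg h]
    have hy2 : (0:ℝ) < y / 2 := by linarith
    calc x ^ (p - 2) ≤ (y / 2) ^ (p - 2) :=
        Real.rpow_le_rpow_of_nonpos hy2 (by linarith) h.le
      _ = y ^ (p - 2) / 2 ^ (p - 2) := Real.div_rpow hy.le (by norm_num) _
      _ = 2 ^ (-(p - 2)) * y ^ (p - 2) := by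
          rw [Real.rpow_neg (by norm_num : (0:ℝ) ≤ 2)]
          ring

private lemma s13_combine {C m Mu E X Y M : ℝ} (hMu : 0 ≤ Mu) (hC : 0 < C)
    (hY : 0 ≤ Y) (hX : 0 ≤ X) (h1 : m * Y ≤ M) (h2 : M ≤ Mu * Y)
    (h3 : X ≤ E * Y) (h4 : Y ≤ E * X) (hC1 : E ≤ m * C) (hC2 : Mu * E ≤ C) :
    1 / C * X ≤ M ∧ M ≤ C * X := by
  constructor
  · have hXCM : X ≤ C * M := by
      calc X ≤ E * Y := h3
        _ ≤ m * C * Y := mul_le_mul_of_nonneg_right hC1 hY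
        _ = C * (m * Y) := by ring
        _ ≤ C * M := mul_le_mul_of_nonneg_left h1 hC.le
    rw [div_mul_eq_mul_div, one_mul, div_le_iff₀ hC]
    linarith
  · calc M ≤ Mu * Y := h2
      _ ≤ Mu * (E * X) := mul_le_mul_of_nonneg_left h4 hMu
      _ = Mu * E * X := by ring
      _ ≤ C * X := mul_le_mul_of_nonneg_right hC2 hX

private lemma s13_core {p : ℝ} (hp : 1 < p) : ∃ C : ℝ, 1 ≤ C ∧ ∀ a b : ℝ, b < a →
    1 / C * (|b| + |a - b|) ^ (p - 2) ≤ (Jp p a - Jp p b) / ((p - 1) * (a - b)) ∧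
    (Jp p a - Jp p b) / ((p - 1) * (a - b)) ≤ C * (|b| + |a - b|) ^ (p - 2) := by
  have hr : (0:ℝ) < p - 1 := by linarith
  have hp0 : (0:ℝ) < p := by linarith
  set E : ℝ := 2 ^ |p - 2| with hE
  set F : ℝ := 2 ^ (p - 1) with hF
  have hE1 : 1 ≤ E := by
    have h := Real.rpow_le_rpow_of_exponent_le one_le_two (abs_nonneg (p - 2))
    simpa using h
  have hF1 : 1 ≤ F := by
    have h := Real.rpow_le_rpow_of_exponent_le one_le_two hr.le
    simpa using h
  set S : ℝ := p + p / (p - 1) + (p - 1) + 2 / (p - 1) with hS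
  have hq1 : 0 < p / (p - 1) := by positivity
  have hq2 : 0 < 2 / (p - 1) := by positivity
  have hSp : p ≤ S := by simp only [hS]; linarith
  have hSq : p / (p - 1) ≤ S := by simp only [hS]; linarith
  have hSr : p - 1 ≤ S := by simp only [hS]; linarith
  have hSs : 2 / (p - 1) ≤ S := by simp only [hS]; linarith
  have hSpos : 0 < S := lt_of_lt_of_le hp0 hSp
  have hEpos : 0 < E := by linarith
  have hFpos : 0 < F := by linarith
  have hCpos : 0 < E * F * S := by positivity
  have hFS : ∀ z : ℝ, z ≤ S → z ≤ F * S := fun z hz => by nlinarith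
  have hEF : 1 ≤ E * F := by nlinarith
  have hS1 : 1 ≤ S := by linarith
  have hC1' : 1 ≤ E * F * S := by
    have h := mul_le_mul hEF hS1 (by norm_num) (by positivity : (0:ℝ) ≤ E * F)
    linarith
  refine ⟨E * F * S, hC1', ?_⟩
  intro a b hba
  have hab : 0 < a - b := by linarith
  have hden : 0 < (p - 1) * (a - b) := mul_pos hr hab
  have hXnn : (0:ℝ) ≤ (|b| + |a - b|) ^ (p - 2) := Real.rpow_nonneg (by positivity) _
  rcases le_or_gt 0 b with hb | hb
  · -- Case 1 : 0 ≤ b < a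
    have ha : 0 < a := lt_of_le_of_lt hb hba
    have hJa : Jp p a = a ^ (p - 1) := s13_Jp_nonneg hp ha.le
    have hJb : Jp p b = b ^ (p - 1) := s13_Jp_nonneg hp hb
    have hX : (|b| + |a - b|) ^ (p - 2) = a ^ (p - 2) := by
      rw [abs_of_nonneg hb, abs_of_pos hab, show b + (a - b) = a by ring]
    obtain ⟨fl, fu⟩ := s13_factA hp hb hba.le
    have hYnn : (0:ℝ) ≤ a ^ (p - 2) := Real.rpow_nonneg ha.le _
    have h1 : 1 / p * (a ^ (p - 2)) ≤ (Jp p a - Jp p b) / ((p - 1) * (a - b)) := by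
      rw [hJa, hJb, le_div_iff₀ hden]
      calc 1 / p * a ^ (p - 2) * ((p - 1) * (a - b))
          = (p - 1) / p * (a ^ (p - 2) * (a - b)) := by ring
        _ ≤ a ^ (p - 1) - b ^ (p - 1) := fl
    have h2 : (Jp p a - Jp p b) / ((p - 1) * (a - b)) ≤ p / (p - 1) * (a ^ (p - 2)) := by
      rw [hJa, hJb, div_le_iff₀ hden]
      calc a ^ (p - 1) - b ^ (p - 1) ≤ p * (a ^ (p - 2) * (a - b)) := fu
        _ = p / (p - 1) * a ^ (p - 2) * ((p - 1) * (a - b)) := by field_simp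
    rw [hX]
    refine s13_combine (E := E) (by positivity) hCpos hYnn hYnn h1 h2 ?_ ?_ ?_ ?_
    · exact le_mul_of_one_le_left hYnn hE1
    · exact le_mul_of_one_le_left hYnn hE1
    · rw [show 1 / p * (E * F * S) = E * F * S / p by ring, le_div_iff₀ hp0]
      calc E * p ≤ E * (F * S) := mul_le_mul_of_nonneg_left (hFS p hSp) hEpos.le
        _ = E * F * S := by ring
    · calc p / (p - 1) * E ≤ F * S * E := mul_le_mul_of_nonneg_right (hFS _ hSq) hEpos.le
        _ = E * F * S := by ring
  · rcases le_or_gt a 0 with ha | ha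
    · -- Case 2 : b < a ≤ 0
      have hb' : b < 0 := lt_of_lt_of_le hba ha
      have hnum : Jp p a - Jp p b = (-b) ^ (p - 1) - (-a) ^ (p - 1) := by
        rw [s13_Jp_nonpos hp ha, s13_Jp_nonpos hp hb'.le]; ring
      obtain ⟨fl, fu⟩ := s13_factA hp (by linarith : (0:ℝ) ≤ -a) (by linarith : -a ≤ -b)
      have hYnn : (0:ℝ) ≤ (-b) ^ (p - 2) := Real.rpow_nonneg (by linarith) _
      have hX : (|b| + |a - b|) ^ (p - 2) = (a - 2 * b) ^ (p - 2) := by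
        rw [abs_of_neg hb', abs_of_pos hab, show -b + (a - b) = a - 2 * b by ring]
      have h1 : 1 / p * ((-b) ^ (p - 2)) ≤ (Jp p a - Jp p b) / ((p - 1) * (a - b)) := by
        rw [hnum, le_div_iff₀ hden]
        calc 1 / p * (-b) ^ (p - 2) * ((p - 1) * (a - b))
            = (p - 1) / p * ((-b) ^ (p - 2) * (-b - -a)) := by ring
          _ ≤ (-b) ^ (p - 1) - (-a) ^ (p - 1) := fl
      have h2 : (Jp p a - Jp p b) / ((p - 1) * (a - b)) ≤ p / (p - 1) * ((-b) ^ (p - 2)) := by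
        rw [hnum, div_le_iff₀ hden]
        calc (-b) ^ (p - 1) - (-a) ^ (p - 1) ≤ p * ((-b) ^ (p - 2) * (-b - -a)) := fu
          _ = p / (p - 1) * (-b) ^ (p - 2) * ((p - 1) * (a - b)) := by field_simp; ring
      rw [hX]
      refine s13_combine (E := E) (by positivity) hCpos hYnn
        (Real.rpow_nonneg (by linarith) _) h1 h2 ?_ ?_ ?_ ?_
      · exact s13_factC p (by linarith) (by linarith) (by linarith) (by linarith)
      · exact s13_factC p (by linarith) (by linarith) (by linarith) (by linarith)
      · rw [show 1 / p * (E * F * S) = E * F * S / p by ring, le_div_iff₀ hp0]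
        calc E * p ≤ E * (F * S) := mul_le_mul_of_nonneg_left (hFS p hSp) hEpos.le
          _ = E * F * S := by ring
      · calc p / (p - 1) * E ≤ F * S * E := mul_le_mul_of_nonneg_right (hFS _ hSq) hEpos.le
          _ = E * F * S := by ring
    · -- Case 3 : b < 0 < a
      have hnum : Jp p a - Jp p b = a ^ (p - 1) + (-b) ^ (p - 1) := by
        rw [s13_Jp_nonneg hp ha.le, s13_Jp_nonpos hp hb.le]; ring
      obtain ⟨gB1, gB2⟩ := s13_factB hp ha (by linarith : (0:ℝ) < -b)
      rw [show a + -b = a - b by ring] at gB1 gB2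
      have hab_pow : (a - b) ^ (p - 1) = (a - b) ^ (p - 2) * (a - b) := by
        rw [show p - 1 = p - 2 + 1 by ring, Real.rpow_add_one hab.ne']
      have hYnn : (0:ℝ) ≤ (a - b) ^ (p - 2) := Real.rpow_nonneg hab.le _
      have hX : (|b| + |a - b|) ^ (p - 2) = (a - 2 * b) ^ (p - 2) := by
        rw [abs_of_neg hb, abs_of_pos hab, show -b + (a - b) = a - 2 * b by ring]
      have h1 : 1 / (F * (p - 1)) * ((a - b) ^ (p - 2))
          ≤ (Jp p a - Jp p b) / ((p - 1) * (a - b)) := by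
        rw [hnum, le_div_iff₀ hden]
        have he : 1 / (F * (p - 1)) * (a - b) ^ (p - 2) * ((p - 1) * (a - b))
            = (a - b) ^ (p - 1) / F := by
          rw [hab_pow]; field_simp
        rw [he, div_le_iff₀ hFpos]
        linarith
      have h2 : (Jp p a - Jp p b) / ((p - 1) * (a - b)) ≤ 2 / (p - 1) * ((a - b) ^ (p - 2)) := by
        rw [hnum, div_le_iff₀ hden]
        calc a ^ (p - 1) + (-b) ^ (p - 1) ≤ 2 * (a - b) ^ (p - 1) := gB2
          _ = 2 / (p - 1) * (a - b) ^ (p - 2) * ((p - 1) * (a - b)) := by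
              rw [hab_pow]; field_simp
      rw [hX]
      refine s13_combine (E := E) (by positivity) hCpos hYnn
        (Real.rpow_nonneg (by linarith) _) h1 h2 ?_ ?_ ?_ ?_
      · exact s13_factC p (by linarith) (by linarith) (by linarith) (by linarith)
      · exact s13_factC p (by linarith) (by linarith) (by linarith) (by linarith)
      · rw [show 1 / (F * (p - 1)) * (E * F * S) = E * F * S / (F * (p - 1)) by ring,
          le_div_iff₀ (by positivity)]
        calc E * (F * (p - 1)) = E * F * (p - 1) := by ring
          _ ≤ E * F * S := mul_le_mul_of_nonneg_left hSr (by positivity)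
      · calc 2 / (p - 1) * E ≤ F * S * E := mul_le_mul_of_nonneg_right (hFS _ hSs) hEpos.le
          _ = E * F * S := by ring

/-- Integral representation and two-sided bounds for `J_p`. -/
theorem statement13 (p : ℝ) (hp : 1 < p) :
    (∀ a b : ℝ, Jp p a - Jp p b =
      (p - 1) * ∫ τ in (0:ℝ)..1, |b + τ * (a - b)| ^ (p - 2) * (a - b)) ∧
    (∃ C : ℝ, 0 < C ∧ ∀ a b : ℝ,
      (1 / C) * (|b| + |a - b|) ^ (p - 2) ≤ (∫ τ in (0:ℝ)..1, |b + τ * (a - b)| ^ (p - 2)) ∧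
      (∫ τ in (0:ℝ)..1, |b + τ * (a - b)| ^ (p - 2)) ≤ C * (|b| + |a - b|) ^ (p - 2)) := by
  have hp1 : (0:ℝ) < p - 1 := by linarith
  constructor
  · intro a b
    rcases eq_or_ne a b with rfl | hab
    · simp
    · rw [intervalIntegral.integral_mul_const, s13_Ival hp hab]
      have hab' : a - b ≠ 0 := sub_ne_zero.mpr hab
      field_simp
  · obtain ⟨C₀, hC₀, hcore⟩ := s13_core hp
    set E : ℝ := 2 ^ |p - 2| with hE
    have hE1 : 1 ≤ E := by
      have h := Real.rpow_le_rpow_of_exponent_le one_le_two (abs_nonneg (p - 2))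
      simpa using h
    have hC₀pos : 0 < C₀ := by linarith
    have hEpos : 0 < E := by linarith
    refine ⟨C₀ * E, by positivity, ?_⟩
    intro a b
    have hXnn : (0:ℝ) ≤ (|b| + |a - b|) ^ (p - 2) := Real.rpow_nonneg (by positivity) _
    rcases lt_trichotomy b a with hba | heq | hba
    · obtain ⟨hl, hu⟩ := hcore a b hba
      rw [s13_Ival hp hba.ne']
      constructor
      · calc 1 / (C₀ * E) * (|b| + |a - b|) ^ (p - 2)
            ≤ 1 / C₀ * (|b| + |a - b|) ^ (p - 2) := by
              apply mul_le_mul_of_nonneg_right _ hXnn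
              apply one_div_le_one_div_of_le hC₀pos
              nlinarith
          _ ≤ _ := hl
      · calc (Jp p a - Jp p b) / ((p - 1) * (a - b))
            ≤ C₀ * (|b| + |a - b|) ^ (p - 2) := hu
          _ ≤ C₀ * E * (|b| + |a - b|) ^ (p - 2) :=
              mul_le_mul_of_nonneg_right (le_mul_of_one_le_right hC₀pos.le hE1) hXnn
    · -- a = b
      subst heq
      have hint : (∫ τ in (0:ℝ)..1, |b + τ * (b - b)| ^ (p - 2)) = |b| ^ (p - 2) := by
        have hcg : ∀ τ ∈ uIcc (0:ℝ) 1, |b + τ * (b - b)| ^ (p - 2) = |b| ^ (p - 2) := by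
          intro τ _
          rw [sub_self, mul_zero, add_zero]
        rw [intervalIntegral.integral_congr hcg, intervalIntegral.integral_const]
        simp
      rw [hint]
      rw [show |b| + |b - b| = |b| by simp]
      have hynn : (0:ℝ) ≤ |b| ^ (p - 2) := Real.rpow_nonneg (abs_nonneg b) _
      have hCE1 : 1 ≤ C₀ * E := by nlinarith
      constructor
      · have h1 : 1 / (C₀ * E) ≤ 1 := by
          rw [div_le_one (by positivity)]
          exact hCE1
        exact mul_le_of_le_one_left hynn h1
      · exact le_mul_of_one_le_left hynn hCE1
    · -- a < b
      obtain ⟨hl, hu⟩ := hcore b a hba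
      have habs : |a - b| > 0 := abs_pos.mpr (sub_ne_zero.mpr hba.ne)
      have hMeq : (Jp p a - Jp p b) / ((p - 1) * (a - b))
          = (Jp p b - Jp p a) / ((p - 1) * (b - a)) := by
        rw [div_eq_div_iff (by nlinarith) (by nlinarith)]
        ring
      rw [s13_Ival hp hba.ne, hMeq]
      have habs2 : |a - b| = |b - a| := abs_sub_comm a b
      have h3 : |b| + |a - b| ≤ 2 * (|a| + |b - a|) := by
        have hba' : |b| ≤ |a| + |b - a| := by
          calc |b| = |a + (b - a)| := by ring_nf
            _ ≤ |a| + |b - a| := abs_add_le _ _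
        have h0 : (0:ℝ) ≤ |a| := abs_nonneg a
        linarith [habs2]
      have h4 : |a| + |b - a| ≤ 2 * (|b| + |a - b|) := by
        have hab' : |a| ≤ |b| + |a - b| := by
          calc |a| = |b + (a - b)| := by ring_nf
            _ ≤ |b| + |a - b| := abs_add_le _ _
        have h0 : (0:ℝ) ≤ |b| := abs_nonneg b
        linarith [habs2]
      have hx1 : (0:ℝ) < |b| + |a - b| := by linarith [abs_nonneg b]
      have hx2 : (0:ℝ) < |a| + |b - a| := by
        have : (0:ℝ) < |b - a| := by rw [← habs2]; exact habs
        linarith [abs_nonneg a]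
      have hXX' : (|b| + |a - b|) ^ (p - 2) ≤ E * (|a| + |b - a|) ^ (p - 2) :=
        s13_factC p hx1 hx2 h3 h4
      have hX'X : (|a| + |b - a|) ^ (p - 2) ≤ E * (|b| + |a - b|) ^ (p - 2) :=
        s13_factC p hx2 hx1 h4 h3
      constructor
      · calc 1 / (C₀ * E) * (|b| + |a - b|) ^ (p - 2)
            ≤ 1 / (C₀ * E) * (E * (|a| + |b - a|) ^ (p - 2)) :=
              mul_le_mul_of_nonneg_left hXX' (by positivity)
          _ = 1 / C₀ * (|a| + |b - a|) ^ (p - 2) := by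
              field_simp
          _ ≤ _ := hl
      · calc (Jp p b - Jp p a) / ((p - 1) * (b - a))
            ≤ C₀ * (|a| + |b - a|) ^ (p - 2) := hu
          _ ≤ C₀ * (E * (|b| + |a - b|) ^ (p - 2)) :=
              mul_le_mul_of_nonneg_left hX'X hC₀pos.le
          _ = C₀ * E * (|b| + |a - b|) ^ (p - 2) := by ring

end
end

section
/- Let d ≥ 1, s ∈ (0,1), 2 ≤ p. Let u be a viscosity solution of ∂_t u + (−Δ_p)^s u = 0 in Q₁ satisfying the normalization ‖u‖_{L^∞(Q₁)} + sup_{t∈(−1,0]} ‖u(·,t)‖_{L^{p−1}_{sp}(ℝ^d)} ≤ 1 and the spatial Hölder bound sup_{x,y∈B₁, x≠y} |u(x,t)−u(y,t)|/|x−y|^κ ≤ C(κ) for all t ∈ (−1,0], for some κ ∈ (0,1). Let L, L₂ > 0, β* > 0, let ψ : ℝ^d → [0,∞), let ω be a nonnegative modulus, and suppose the function Φ(x,y,t) := u(x,t) − u(y,t) − L ω(|x−y|) − L₂ ψ(x) − L₂ (−t)^{1+β*} attains a positive supremum over B̄₁ × B̄₁ × [−1,0] at an interior point (x̄, ȳ,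 t̄) with t̄ < 0, at which the quantity I := (−Δ_p)^s u(x̄, t̄) − (−Δ_p)^s u(ȳ, t̄) is well defined and satisfies I ≤ L₂ (1+β*)(−t̄)^{β*}. Then I ≤ C |x̄ − ȳ|^{κβ*/(1+β*)}, where C > 0 depends only on L₂, β*, κ, C(κ), d, p and s. -/
open MeasureTheory Real Set Filter Topology

noncomputable section

/-- Estimate on the difference of fractional `p`-Laplacians at the
maximum point of the doubled-variables function. -/
theorem statement17
    (d : ℕ) (hd : 1 ≤ d) (s p : ℝ) (hs : s ∈ Ioo (0:ℝ) 1) (hp : 2 ≤ p)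
    (κ Cκ L₂ βs : ℝ) (hκ : κ ∈ Ioo (0:ℝ) 1) (hCκ : 0 < Cκ) (hL₂ : 0 < L₂) (hβ : 0 < βs) :
    ∃ C : ℝ, 0 < C ∧
    ∀ u : Rd d → ℝ → ℝ,
      IsViscositySol d s p u (Metric.ball (0 : Rd d) 1) (-1) 0 →
      -- normalization
      (∃ M₁ M₂ : ℝ, (∀ q ∈ pCyl d (0 : Rd d) 0 1, |u q.1 q.2| ≤ M₁) ∧
        (∀ t ∈ Ioc (-1:ℝ) 0, MemTailSpace d s p (fun x => u x t) ∧
          tailNorm d s p (fun x => u x t) ≤ M₂) ∧ M₁ + M₂ ≤ 1) →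
      -- spatial Hölder bound
      (∀ t ∈ Ioc (-1:ℝ) 0, ∀ x ∈ Metric.ball (0 : Rd d) 1, ∀ y ∈ Metric.ball (0 : Rd d) 1,
        |u x t - u y t| ≤ Cκ * ‖x - y‖ ^ κ) →
      ∀ L : ℝ, 0 < L → ∀ ω : ℝ → ℝ, (∀ ρ : ℝ, 0 ≤ ω ρ) →
      ∀ ψ : Rd d → ℝ, (∀ x, 0 ≤ ψ x) →
      ∀ xb yb : Rd d, ∀ tb : ℝ,
        xb ∈ Metric.ball (0 : Rd d) 1 → yb ∈ Metric.ball (0 : Rd d) 1 → tb ∈ Ioo (-1:ℝ) 0 →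
        -- positive supremum attained at the interior point (xb, yb, tb)
        (0 < u xb tb - u yb tb - L * ω ‖xb - yb‖ - L₂ * ψ xb - L₂ * (-tb) ^ (1 + βs)) →
        (∀ x ∈ Metric.closedBall (0 : Rd d) 1, ∀ y ∈ Metric.closedBall (0 : Rd d) 1,
          ∀ t ∈ Icc (-1:ℝ) 0,
          u x t - u y t - L * ω ‖x - y‖ - L₂ * ψ x - L₂ * (-t) ^ (1 + βs) ≤
            u xb tb - u yb tb - L * ω ‖xb - yb‖ - L₂ * ψ xb - L₂ * (-tb) ^ (1 + βs)) →
      ∀ Ix Iy : ℝ,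
        HasFracPLap d s p (fun x => u x tb) xb Ix →
        HasFracPLap d s p (fun x => u x tb) yb Iy →
        Ix - Iy ≤ L₂ * (1 + βs) * (-tb) ^ βs →
        Ix - Iy ≤ C * ‖xb - yb‖ ^ (κ * βs / (1 + βs)) := by
  have h1β : (0:ℝ) < 1 + βs := by linarith
  set e : ℝ := βs / (1 + βs) with he
  have he0 : 0 < e := div_pos hβ h1β
  refine ⟨L₂ * (1 + βs) * (Cκ / L₂) ^ e, by positivity, ?_⟩
  intro u _ _ hHold L hL ω hω ψ hψ xb yb tb hxb hyb htb hpos _ Ix Iy _ _ hI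
  have ht0 : 0 < -tb := by linarith [htb.2]
  -- key inequality
  have hub : L₂ * (-tb) ^ (1 + βs) ≤ Cκ * ‖xb - yb‖ ^ κ := by
    have h1 : u xb tb - u yb tb ≤ Cκ * ‖xb - yb‖ ^ κ :=
      (le_abs_self _).trans (hHold tb ⟨htb.1, le_of_lt htb.2⟩ xb hxb yb hyb)
    nlinarith [hω ‖xb - yb‖, hψ xb, mul_nonneg hL.le (hω ‖xb - yb‖),
      mul_nonneg hL₂.le (hψ xb)]
  have hub' : (-tb) ^ (1 + βs) ≤ (Cκ / L₂) * ‖xb - yb‖ ^ κ := by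
    rw [div_mul_eq_mul_div, le_div_iff₀ hL₂]
    linarith [hub]
  have hbase : (0:ℝ) ≤ (Cκ / L₂) * ‖xb - yb‖ ^ κ := by positivity
  have h2 : (-tb) ^ βs ≤ (Cκ / L₂) ^ e * ‖xb - yb‖ ^ (κ * e) := by
    have := Real.rpow_le_rpow (Real.rpow_nonneg ht0.le _) hub' he0.le
    rw [← Real.rpow_mul ht0.le] at this
    have hex : (1 + βs) * e = βs := by
      rw [he]; field_simp [h1β.ne']
    rw [hex] at this
    rwa [Real.mul_rpow (by positivity) (by positivity),
      ← Real.rpow_mul (norm_nonneg _)] at this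
  calc Ix - Iy ≤ L₂ * (1 + βs) * (-tb) ^ βs := hI
    _ ≤ L₂ * (1 + βs) * ((Cκ / L₂) ^ e * ‖xb - yb‖ ^ (κ * e)) := by
        apply mul_le_mul_of_nonneg_left h2 (by positivity)
    _ = L₂ * (1 + βs) * (Cκ / L₂) ^ e * ‖xb - yb‖ ^ (κ * βs / (1 + βs)) := by
        rw [he]; ring_nf


end
end
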